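/- Let X be a θ_4-graph on n vertices consisting of two vertices v, w joined by four pairwise internally disjoint paths P_1, P_2, P_3, P_4 of lengths p_1 = 1 < p_2 ≤ p_3 ≤ p_4 (so n = p_2 + p_3 + p_4 − 1). Then FS(X, Star_n) contains a cycle of length 4 + 4p_2 + 2(p_3 + p_4); in particular, g(FS(X, Star_n)) ≤ 4 + 4p_2 + 2(p_3 + p_4). -/

import Mathlib

open SimpleGraph

/-- The friends-and-strangers graph `FS X Y`: its vertices are the bijections from `V(X)`
to `V(Y)`, with `σ, τ` adjacent iff they differ by a swap along an edge of `X` whose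
images under `σ` form an edge of `Y`. -/
def FS {V W : Type*} (X : SimpleGraph V) (Y : SimpleGraph W) : SimpleGraph (V ≃ W) where
  Adj σ τ := ∃ a b : V, X.Adj a b ∧ Y.Adj (σ a) (σ b) ∧ τ a = σ b ∧ τ b = σ a ∧
      ∀ c : V, c ≠ a → c ≠ b → τ c = σ c
  symm := by
    constructor
    rintro σ τ ⟨a, b, hX, hY, h1, h2, h3⟩
    refine ⟨a, b, hX, ?_, h2.symm, h1.symm, fun c hca hcb => (h3 c hca hcb).symm⟩
    rw [h1, h2]; exact hY.symm
  loopless := by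
    constructor
    rintro σ ⟨a, b, hX, hY, h1, h2, h3⟩
    exact hY.ne h1

/-- The star graph on `Fin n`: the vertex with value `n - 1` (playing the role of the
vertex `n` of `{1, …, n}`) is adjacent to all other vertices, and there are no
other edges. -/
def starGraphFin (n : ℕ) : SimpleGraph (Fin n) where
  Adj a b := a ≠ b ∧ (a.val = n - 1 ∨ b.val = n - 1)
  symm := by constructor; rintro a b ⟨h1, h2⟩; exact ⟨h1.symm, h2.symm⟩
  loopless := by constructor; rintro a ⟨h, _⟩; exact h rfl

open SimpleGraph

structure TD (V : Type) (X : SimpleGraph V) where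
  v : V
  w : V
  m2 : ℕ
  m3 : ℕ
  m4 : ℕ
  c2 : ℕ → V
  c3 : ℕ → V
  c4 : ℕ → V
  hm2 : 2 ≤ m2
  hm3 : 2 ≤ m3
  hm4 : 2 ≤ m4
  hvw : X.Adj v w
  h20 : c2 0 = v
  h2m : c2 m2 = w
  h30 : c3 0 = v
  h3m : c3 m3 = w
  h40 : c4 0 = v
  h4m : c4 m4 = w
  adj2 : ∀ j < m2, X.Adj (c2 j) (c2 (j+1))
  adj3 : ∀ j < m3, X.Adj (c3 j) (c3 (j+1))
  adj4 : ∀ j < m4, X.Adj (c4 j) (c4 (j+1))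
  inj2 : ∀ j ≤ m2, ∀ l ≤ m2, c2 j = c2 l → j = l
  inj3 : ∀ j ≤ m3, ∀ l ≤ m3, c3 j = c3 l → j = l
  inj4 : ∀ j ≤ m4, ∀ l ≤ m4, c4 j = c4 l → j = l
  d23 : ∀ j l, 0 < j → j < m2 → 0 < l → l < m3 → c2 j ≠ c3 l
  d24 : ∀ j l, 0 < j → j < m2 → 0 < l → l < m4 → c2 j ≠ c4 l
  d34 : ∀ j l, 0 < j → j < m3 → 0 < l → l < m4 → c3 j ≠ c4 l
  cover : ∀ x : V, x = v ∨ x = w ∨ (∃ j, 0 < j ∧ j < m2 ∧ x = c2 j) ∨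
    (∃ j, 0 < j ∧ j < m3 ∧ x = c3 j) ∨ (∃ j, 0 < j ∧ j < m4 ∧ x = c4 j)

namespace TD

variable {V : Type} {X : SimpleGraph V} (T : TD V X)

/-- The hole route. -/
def r (k : ℕ) : V :=
  if k ≤ T.m2 then T.c2 (T.m2 - k)
  else if k ≤ T.m2+1 then T.w
  else if k ≤ T.m2+T.m3+1 then T.c3 (T.m2+T.m3+1 - k)
  else if k ≤ 2*T.m2+T.m3+1 then T.c2 (k - (T.m2+T.m3+1))
  else if k ≤ 2*T.m2+T.m3+2 then T.v
  else if k ≤ 2*T.m2+T.m3+T.m4+2 then T.c4 (k - (2*T.m2+T.m3+2))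
  else if k ≤ 3*T.m2+T.m3+T.m4+2 then T.c2 (3*T.m2+T.m3+T.m4+2 - k)
  else if k ≤ 3*T.m2+2*T.m3+T.m4+2 then T.c3 (k - (3*T.m2+T.m3+T.m4+2))
  else if k ≤ 3*T.m2+2*T.m3+T.m4+3 then T.v
  else if k ≤ 4*T.m2+2*T.m3+T.m4+3 then T.c2 (k - (3*T.m2+2*T.m3+T.m4+3))
  else if k ≤ 4*T.m2+2*T.m3+2*T.m4+3 then T.c4 (4*T.m2+2*T.m3+2*T.m4+3 - k)
  else T.w

lemma E1 {k : ℕ} (h : k ≤ T.m2) : T.r k = T.c2 (T.m2 - k) := by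
  rw [r, if_pos h]

lemma E2 {k : ℕ} (h1 : T.m2+1 ≤ k) (h2 : k ≤ T.m2+T.m3+1) :
    T.r k = T.c3 (T.m2+T.m3+1 - k) := by
  rw [r, if_neg (by omega)]
  by_cases hb : k ≤ T.m2+1
  · rw [if_pos hb]
    have e : T.m2+T.m3+1-k = T.m3 := by omega
    rw [e, T.h3m]
  · rw [if_neg hb, if_pos h2]

lemma E3 {k : ℕ} (h1 : T.m2+T.m3+1 ≤ k) (h2 : k ≤ 2*T.m2+T.m3+1) :
    T.r k = T.c2 (k - (T.m2+T.m3+1)) := by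
  have hm3 := T.hm3
  rw [r, if_neg (by omega), if_neg (by omega)]
  by_cases hb : k ≤ T.m2+T.m3+1
  · rw [if_pos hb]
    have e1 : T.m2+T.m3+1-k = 0 := by omega
    have e2 : k - (T.m2+T.m3+1) = 0 := by omega
    rw [e1, e2, T.h30, T.h20]
  · rw [if_neg hb, if_pos h2]

lemma E4 {k : ℕ} (h1 : 2*T.m2+T.m3+2 ≤ k) (h2 : k ≤ 2*T.m2+T.m3+T.m4+2) :
    T.r k = T.c4 (k - (2*T.m2+T.m3+2)) := by
  have hm2 := T.hm2; have hm3 := T.hm3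
  rw [r, if_neg (by omega), if_neg (by omega), if_neg (by omega), if_neg (by omega)]
  by_cases hb : k ≤ 2*T.m2+T.m3+2
  · rw [if_pos hb]
    have e2 : k - (2*T.m2+T.m3+2) = 0 := by omega
    rw [e2, T.h40]
  · rw [if_neg hb, if_pos h2]

lemma E5 {k : ℕ} (h1 : 2*T.m2+T.m3+T.m4+2 ≤ k) (h2 : k ≤ 3*T.m2+T.m3+T.m4+2) :
    T.r k = T.c2 (3*T.m2+T.m3+T.m4+2 - k) := by
  have hm2 := T.hm2; have hm3 := T.hm3; have hm4 := T.hm4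
  rw [r, if_neg (by omega), if_neg (by omega), if_neg (by omega), if_neg (by omega),
    if_neg (by omega)]
  by_cases hb : k ≤ 2*T.m2+T.m3+T.m4+2
  · rw [if_pos hb]
    have e1 : k - (2*T.m2+T.m3+2) = T.m4 := by omega
    have e2 : 3*T.m2+T.m3+T.m4+2 - k = T.m2 := by omega
    rw [e1, e2, T.h4m, T.h2m]
  · rw [if_neg hb, if_pos h2]

lemma E6 {k : ℕ} (h1 : 3*T.m2+T.m3+T.m4+2 ≤ k) (h2 : k ≤ 3*T.m2+2*T.m3+T.m4+2) :
    T.r k = T.c3 (k - (3*T.m2+T.m3+T.m4+2)) := by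
  have hm2 := T.hm2; have hm3 := T.hm3; have hm4 := T.hm4
  rw [r, if_neg (by omega), if_neg (by omega), if_neg (by omega), if_neg (by omega),
    if_neg (by omega), if_neg (by omega)]
  by_cases hb : k ≤ 3*T.m2+T.m3+T.m4+2
  · rw [if_pos hb]
    have e1 : 3*T.m2+T.m3+T.m4+2 - k = 0 := by omega
    have e2 : k - (3*T.m2+T.m3+T.m4+2) = 0 := by omega
    rw [e1, e2, T.h20, T.h30]
  · rw [if_neg hb, if_pos h2]

lemma E7 {k : ℕ} (h1 : 3*T.m2+2*T.m3+T.m4+3 ≤ k) (h2 : k ≤ 4*T.m2+2*T.m3+T.m4+3) :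
    T.r k = T.c2 (k - (3*T.m2+2*T.m3+T.m4+3)) := by
  have hm2 := T.hm2; have hm3 := T.hm3; have hm4 := T.hm4
  rw [r, if_neg (by omega), if_neg (by omega), if_neg (by omega), if_neg (by omega),
    if_neg (by omega), if_neg (by omega), if_neg (by omega), if_neg (by omega)]
  by_cases hb : k ≤ 3*T.m2+2*T.m3+T.m4+3
  · rw [if_pos hb]
    have e2 : k - (3*T.m2+2*T.m3+T.m4+3) = 0 := by omega
    rw [e2, T.h20]
  · rw [if_neg hb, if_pos h2]

lemma E8 {k : ℕ} (h1 : 4*T.m2+2*T.m3+T.m4+3 ≤ k) (h2 : k ≤ 4*T.m2+2*T.m3+2*T.m4+3) :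
    T.r k = T.c4 (4*T.m2+2*T.m3+2*T.m4+3 - k) := by
  have hm2 := T.hm2; have hm3 := T.hm3; have hm4 := T.hm4
  rw [r, if_neg (by omega), if_neg (by omega), if_neg (by omega), if_neg (by omega),
    if_neg (by omega), if_neg (by omega), if_neg (by omega), if_neg (by omega),
    if_neg (by omega)]
  by_cases hb : k ≤ 4*T.m2+2*T.m3+T.m4+3
  · rw [if_pos hb]
    have e1 : k - (3*T.m2+2*T.m3+T.m4+3) = T.m2 := by omega
    have e2 : 4*T.m2+2*T.m3+2*T.m4+3 - k = T.m4 := by omega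
    rw [e1, e2, T.h2m, T.h4m]
  · rw [if_neg hb, if_pos h2]

lemma E9 {k : ℕ} (h1 : 4*T.m2+2*T.m3+2*T.m4+4 ≤ k) : T.r k = T.w := by
  have hm2 := T.hm2; have hm3 := T.hm3; have hm4 := T.hm4
  rw [r, if_neg (by omega), if_neg (by omega), if_neg (by omega), if_neg (by omega),
    if_neg (by omega), if_neg (by omega), if_neg (by omega), if_neg (by omega),
    if_neg (by omega), if_neg (by omega), if_neg (by omega)]

lemma r_zero : T.r 0 = T.w := by
  rw [T.E1 (by omega)]; simpa using T.h2m

lemma vw : T.v ≠ T.w := T.hvw.ne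

lemma c2_ne_v {i : ℕ} (h1 : 0 < i) (h2 : i ≤ T.m2) : T.c2 i ≠ T.v := by
  intro hE; rw [← T.h20] at hE; have := T.inj2 i h2 0 (by omega) hE; omega

lemma c2_ne_w {i : ℕ} (h2 : i < T.m2) : T.c2 i ≠ T.w := by
  intro hE; rw [← T.h2m] at hE; have := T.inj2 i (by omega) T.m2 (by omega) hE; omega

lemma c3_ne_v {i : ℕ} (h1 : 0 < i) (h2 : i ≤ T.m3) : T.c3 i ≠ T.v := by
  intro hE; rw [← T.h30] at hE; have := T.inj3 i h2 0 (by omega) hE; omega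

lemma c3_ne_w {i : ℕ} (h2 : i < T.m3) : T.c3 i ≠ T.w := by
  intro hE; rw [← T.h3m] at hE; have := T.inj3 i (by omega) T.m3 (by omega) hE; omega

lemma c4_ne_v {i : ℕ} (h1 : 0 < i) (h2 : i ≤ T.m4) : T.c4 i ≠ T.v := by
  intro hE; rw [← T.h40] at hE; have := T.inj4 i h2 0 (by omega) hE; omega

lemma c4_ne_w {i : ℕ} (h2 : i < T.m4) : T.c4 i ≠ T.w := by
  intro hE; rw [← T.h4m] at hE; have := T.inj4 i (by omega) T.m4 (by omega) hE; omega

lemma segs {k : ℕ} (hk : k ≤ 4*T.m2+2*T.m3+2*T.m4+4) :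
    (k ≤ T.m2) ∨ (T.m2+1 ≤ k ∧ k ≤ T.m2+T.m3+1) ∨
    (T.m2+T.m3+1 ≤ k ∧ k ≤ 2*T.m2+T.m3+1) ∨
    (2*T.m2+T.m3+2 ≤ k ∧ k ≤ 2*T.m2+T.m3+T.m4+2) ∨
    (2*T.m2+T.m3+T.m4+2 ≤ k ∧ k ≤ 3*T.m2+T.m3+T.m4+2) ∨
    (3*T.m2+T.m3+T.m4+2 ≤ k ∧ k ≤ 3*T.m2+2*T.m3+T.m4+2) ∨
    (3*T.m2+2*T.m3+T.m4+3 ≤ k ∧ k ≤ 4*T.m2+2*T.m3+T.m4+3) ∨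
    (4*T.m2+2*T.m3+T.m4+3 ≤ k ∧ k ≤ 4*T.m2+2*T.m3+2*T.m4+3) ∨
    (k = 4*T.m2+2*T.m3+2*T.m4+4) := by omega

section Boards
variable [DecidableEq V]

def b : ℕ → Equiv.Perm V
  | 0 => 1
  | (k+1) => b k * Equiv.swap (T.r k) (T.r (k+1))

lemma b_zero : T.b 0 = 1 := rfl

lemma b_succ (k : ℕ) : T.b (k+1) = T.b k * Equiv.swap (T.r k) (T.r (k+1)) := rfl

lemma hole : ∀ k, T.b k (T.r k) = T.w := by
  intro k
  induction k with
  | zero => rw [b_zero, r_zero]; rfl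
  | succ n ih =>
      rw [b_succ, Equiv.Perm.mul_apply, Equiv.swap_apply_right]
      exact ih

def pos (h : V) (k : ℕ) : V := (T.b k)⁻¹ h

lemma pos_zero (h : V) : T.pos h 0 = h := by
  rw [pos, b_zero]; rfl

lemma pos_w (k : ℕ) : T.pos T.w k = T.r k := by
  rw [pos, ← T.hole k, ← Equiv.Perm.mul_apply, inv_mul_cancel, Equiv.Perm.one_apply]

lemma pos_succ (h : V) (k : ℕ) :
    T.pos h (k+1) = Equiv.swap (T.r k) (T.r (k+1)) (T.pos h k) := by
  rw [pos, pos, b_succ, mul_inv_rev, Equiv.Perm.mul_apply, Equiv.swap_inv]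

lemma pos_ne_r {h : V} (hne : h ≠ T.w) (k : ℕ) : T.pos h k ≠ T.r k := by
  intro hE
  apply hne
  have : h = T.b k (T.pos h k) := by rw [pos, ← Equiv.Perm.mul_apply, mul_inv_cancel, Equiv.Perm.one_apply]
  rw [this, hE, T.hole k]

lemma pos_const {h P : V} (hne : h ≠ T.w) {a K : ℕ} (hP : T.pos h a = P)
    (haK : a ≤ K) (havoid : ∀ j, a < j → j ≤ K → T.r j ≠ P) : T.pos h K = P := by
  induction K, haK using Nat.le_induction with
  | base => exact hP
  | succ n hn ih =>
      have hpn : T.pos h n = P := ih (fun j hj1 hj2 => havoid j hj1 (by omega))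
      rw [pos_succ, hpn]
      refine Equiv.swap_apply_of_ne_of_ne ?_ ?_
      · rw [← hpn]; exact T.pos_ne_r hne n
      · exact fun hE => havoid (n+1) (by omega) (by omega) hE.symm

lemma pos_move {h : V} {a : ℕ} (hP : T.pos h a = T.r (a+1)) :
    T.pos h (a+1) = T.r a := by
  rw [pos_succ, hP, Equiv.swap_apply_right]

end Boards

lemma AV_v {k : ℕ} (hk : k ≤ 4*T.m2+2*T.m3+2*T.m4+4) (hE : T.r k = T.v) :
    k = T.m2 ∨ k = T.m2+T.m3+1 ∨ k = 2*T.m2+T.m3+2 ∨ k = 3*T.m2+T.m3+T.m4+2 ∨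
    k = 3*T.m2+2*T.m3+T.m4+3 ∨ k = 4*T.m2+2*T.m3+2*T.m4+3 := by
  rcases T.segs hk with h | h | h | h | h | h | h | h | h
  · rw [T.E1 h] at hE
    by_cases hi : T.m2 - k = 0
    · omega
    · exact absurd hE (T.c2_ne_v (by omega) (by omega))
  · rw [T.E2 h.1 h.2] at hE
    by_cases hi : T.m2+T.m3+1-k = 0
    · omega
    · exact absurd hE (T.c3_ne_v (by omega) (by omega))
  · rw [T.E3 h.1 h.2] at hE
    by_cases hi : k - (T.m2+T.m3+1) = 0
    · omega
    · exact absurd hE (T.c2_ne_v (by omega) (by omega))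
  · rw [T.E4 h.1 h.2] at hE
    by_cases hi : k - (2*T.m2+T.m3+2) = 0
    · omega
    · exact absurd hE (T.c4_ne_v (by omega) (by omega))
  · rw [T.E5 h.1 h.2] at hE
    by_cases hi : 3*T.m2+T.m3+T.m4+2 - k = 0
    · omega
    · exact absurd hE (T.c2_ne_v (by omega) (by omega))
  · rw [T.E6 h.1 h.2] at hE
    by_cases hi : k - (3*T.m2+T.m3+T.m4+2) = 0
    · omega
    · exact absurd hE (T.c3_ne_v (by omega) (by omega))
  · rw [T.E7 h.1 h.2] at hE
    by_cases hi : k - (3*T.m2+2*T.m3+T.m4+3) = 0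
    · omega
    · exact absurd hE (T.c2_ne_v (by omega) (by omega))
  · rw [T.E8 h.1 h.2] at hE
    by_cases hi : 4*T.m2+2*T.m3+2*T.m4+3 - k = 0
    · omega
    · exact absurd hE (T.c4_ne_v (by omega) (by omega))
  · rw [T.E9 (by omega)] at hE
    exact absurd hE.symm T.vw

lemma AV_w {k : ℕ} (hk : k ≤ 4*T.m2+2*T.m3+2*T.m4+4) (hE : T.r k = T.w) :
    k = 0 ∨ k = T.m2+1 ∨ k = 2*T.m2+T.m3+1 ∨ k = 2*T.m2+T.m3+T.m4+2 ∨
    k = 3*T.m2+2*T.m3+T.m4+2 ∨ k = 4*T.m2+2*T.m3+T.m4+3 ∨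
    k = 4*T.m2+2*T.m3+2*T.m4+4 := by
  rcases T.segs hk with h | h | h | h | h | h | h | h | h
  · rw [T.E1 h] at hE
    by_cases hi : T.m2 - k = T.m2
    · omega
    · exact absurd hE (T.c2_ne_w (by omega))
  · rw [T.E2 h.1 h.2] at hE
    by_cases hi : T.m2+T.m3+1-k = T.m3
    · omega
    · exact absurd hE (T.c3_ne_w (by omega))
  · rw [T.E3 h.1 h.2] at hE
    by_cases hi : k - (T.m2+T.m3+1) = T.m2
    · omega
    · exact absurd hE (T.c2_ne_w (by omega))
  · rw [T.E4 h.1 h.2] at hE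
    by_cases hi : k - (2*T.m2+T.m3+2) = T.m4
    · omega
    · exact absurd hE (T.c4_ne_w (by omega))
  · rw [T.E5 h.1 h.2] at hE
    by_cases hi : 3*T.m2+T.m3+T.m4+2 - k = T.m2
    · omega
    · exact absurd hE (T.c2_ne_w (by omega))
  · rw [T.E6 h.1 h.2] at hE
    by_cases hi : k - (3*T.m2+T.m3+T.m4+2) = T.m3
    · omega
    · exact absurd hE (T.c3_ne_w (by omega))
  · rw [T.E7 h.1 h.2] at hE
    by_cases hi : k - (3*T.m2+2*T.m3+T.m4+3) = T.m2
    · omega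
    · exact absurd hE (T.c2_ne_w (by omega))
  · rw [T.E8 h.1 h.2] at hE
    by_cases hi : 4*T.m2+2*T.m3+2*T.m4+3 - k = T.m4
    · omega
    · exact absurd hE (T.c4_ne_w (by omega))
  · omega

lemma AV_c2 {k i : ℕ} (hk : k ≤ 4*T.m2+2*T.m3+2*T.m4+4) (hi1 : 0 < i)
    (hi2 : i < T.m2) (hE : T.r k = T.c2 i) :
    k = T.m2 - i ∨ k = T.m2+T.m3+1+i ∨ k = 3*T.m2+T.m3+T.m4+2-i ∨
    k = 3*T.m2+2*T.m3+T.m4+3+i := by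
  rcases T.segs hk with h | h | h | h | h | h | h | h | h
  · rw [T.E1 h] at hE
    have := T.inj2 _ (by omega) _ (by omega) hE; omega
  · rw [T.E2 h.1 h.2] at hE
    by_cases h0 : T.m2+T.m3+1-k = 0
    · rw [h0, T.h30] at hE; exact absurd hE.symm (T.c2_ne_v hi1 (by omega))
    · by_cases hm : T.m2+T.m3+1-k = T.m3
      · rw [hm, T.h3m] at hE; exact absurd hE.symm (T.c2_ne_w hi2)
      · exact absurd hE.symm (T.d23 i _ hi1 hi2 (by omega) (by omega))
  · rw [T.E3 h.1 h.2] at hE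
    have := T.inj2 _ (by omega) _ (by omega) hE; omega
  · rw [T.E4 h.1 h.2] at hE
    by_cases h0 : k - (2*T.m2+T.m3+2) = 0
    · rw [h0, T.h40] at hE; exact absurd hE.symm (T.c2_ne_v hi1 (by omega))
    · by_cases hm : k - (2*T.m2+T.m3+2) = T.m4
      · rw [hm, T.h4m] at hE; exact absurd hE.symm (T.c2_ne_w hi2)
      · exact absurd hE.symm (T.d24 i _ hi1 hi2 (by omega) (by omega))
  · rw [T.E5 h.1 h.2] at hE
    have := T.inj2 _ (by omega) _ (by omega) hE; omega
  · rw [T.E6 h.1 h.2] at hE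
    by_cases h0 : k - (3*T.m2+T.m3+T.m4+2) = 0
    · rw [h0, T.h30] at hE; exact absurd hE.symm (T.c2_ne_v hi1 (by omega))
    · by_cases hm : k - (3*T.m2+T.m3+T.m4+2) = T.m3
      · rw [hm, T.h3m] at hE; exact absurd hE.symm (T.c2_ne_w hi2)
      · exact absurd hE.symm (T.d23 i _ hi1 hi2 (by omega) (by omega))
  · rw [T.E7 h.1 h.2] at hE
    have := T.inj2 _ (by omega) _ (by omega) hE; omega
  · rw [T.E8 h.1 h.2] at hE
    by_cases h0 : 4*T.m2+2*T.m3+2*T.m4+3 - k = 0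
    · rw [h0, T.h40] at hE; exact absurd hE.symm (T.c2_ne_v hi1 (by omega))
    · by_cases hm : 4*T.m2+2*T.m3+2*T.m4+3 - k = T.m4
      · rw [hm, T.h4m] at hE; exact absurd hE.symm (T.c2_ne_w hi2)
      · exact absurd hE.symm (T.d24 i _ hi1 hi2 (by omega) (by omega))
  · rw [T.E9 (by omega)] at hE
    exact absurd hE.symm (T.c2_ne_w hi2)

lemma AV_c3 {k i : ℕ} (hk : k ≤ 4*T.m2+2*T.m3+2*T.m4+4) (hi1 : 0 < i)
    (hi2 : i < T.m3) (hE : T.r k = T.c3 i) :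
    k = T.m2+T.m3+1-i ∨ k = 3*T.m2+T.m3+T.m4+2+i := by
  rcases T.segs hk with h | h | h | h | h | h | h | h | h
  · rw [T.E1 h] at hE
    by_cases h0 : T.m2 - k = 0
    · rw [h0, T.h20] at hE; exact absurd hE.symm (T.c3_ne_v hi1 (by omega))
    · by_cases hm : T.m2 - k = T.m2
      · rw [hm, T.h2m] at hE; exact absurd hE.symm (T.c3_ne_w hi2)
      · exact absurd hE (T.d23 _ i (by omega) (by omega) hi1 hi2)
  · rw [T.E2 h.1 h.2] at hE
    have := T.inj3 _ (by omega) _ (by omega) hE; omega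
  · rw [T.E3 h.1 h.2] at hE
    by_cases h0 : k - (T.m2+T.m3+1) = 0
    · rw [h0, T.h20] at hE; exact absurd hE.symm (T.c3_ne_v hi1 (by omega))
    · by_cases hm : k - (T.m2+T.m3+1) = T.m2
      · rw [hm, T.h2m] at hE; exact absurd hE.symm (T.c3_ne_w hi2)
      · exact absurd hE (T.d23 _ i (by omega) (by omega) hi1 hi2)
  · rw [T.E4 h.1 h.2] at hE
    by_cases h0 : k - (2*T.m2+T.m3+2) = 0
    · rw [h0, T.h40] at hE; exact absurd hE.symm (T.c3_ne_v hi1 (by omega))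
    · by_cases hm : k - (2*T.m2+T.m3+2) = T.m4
      · rw [hm, T.h4m] at hE; exact absurd hE.symm (T.c3_ne_w hi2)
      · exact absurd hE.symm (T.d34 i _ hi1 hi2 (by omega) (by omega))
  · rw [T.E5 h.1 h.2] at hE
    by_cases h0 : 3*T.m2+T.m3+T.m4+2 - k = 0
    · rw [h0, T.h20] at hE; exact absurd hE.symm (T.c3_ne_v hi1 (by omega))
    · by_cases hm : 3*T.m2+T.m3+T.m4+2 - k = T.m2
      · rw [hm, T.h2m] at hE; exact absurd hE.symm (T.c3_ne_w hi2)
      · exact absurd hE (T.d23 _ i (by omega) (by omega) hi1 hi2)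
  · rw [T.E6 h.1 h.2] at hE
    have := T.inj3 _ (by omega) _ (by omega) hE; omega
  · rw [T.E7 h.1 h.2] at hE
    by_cases h0 : k - (3*T.m2+2*T.m3+T.m4+3) = 0
    · rw [h0, T.h20] at hE; exact absurd hE.symm (T.c3_ne_v hi1 (by omega))
    · by_cases hm : k - (3*T.m2+2*T.m3+T.m4+3) = T.m2
      · rw [hm, T.h2m] at hE; exact absurd hE.symm (T.c3_ne_w hi2)
      · exact absurd hE (T.d23 _ i (by omega) (by omega) hi1 hi2)
  · rw [T.E8 h.1 h.2] at hE
    by_cases h0 : 4*T.m2+2*T.m3+2*T.m4+3 - k = 0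
    · rw [h0, T.h40] at hE; exact absurd hE.symm (T.c3_ne_v hi1 (by omega))
    · by_cases hm : 4*T.m2+2*T.m3+2*T.m4+3 - k = T.m4
      · rw [hm, T.h4m] at hE; exact absurd hE.symm (T.c3_ne_w hi2)
      · exact absurd hE.symm (T.d34 i _ hi1 hi2 (by omega) (by omega))
  · rw [T.E9 (by omega)] at hE
    exact absurd hE.symm (T.c3_ne_w hi2)

lemma AV_c4 {k i : ℕ} (hk : k ≤ 4*T.m2+2*T.m3+2*T.m4+4) (hi1 : 0 < i)
    (hi2 : i < T.m4) (hE : T.r k = T.c4 i) :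
    k = 2*T.m2+T.m3+2+i ∨ k = 4*T.m2+2*T.m3+2*T.m4+3-i := by
  rcases T.segs hk with h | h | h | h | h | h | h | h | h
  · rw [T.E1 h] at hE
    by_cases h0 : T.m2 - k = 0
    · rw [h0, T.h20] at hE; exact absurd hE.symm (T.c4_ne_v hi1 (by omega))
    · by_cases hm : T.m2 - k = T.m2
      · rw [hm, T.h2m] at hE; exact absurd hE.symm (T.c4_ne_w hi2)
      · exact absurd hE (T.d24 _ i (by omega) (by omega) hi1 hi2)
  · rw [T.E2 h.1 h.2] at hE
    by_cases h0 : T.m2+T.m3+1-k = 0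
    · rw [h0, T.h30] at hE; exact absurd hE.symm (T.c4_ne_v hi1 (by omega))
    · by_cases hm : T.m2+T.m3+1-k = T.m3
      · rw [hm, T.h3m] at hE; exact absurd hE.symm (T.c4_ne_w hi2)
      · exact absurd hE (T.d34 _ i (by omega) (by omega) hi1 hi2)
  · rw [T.E3 h.1 h.2] at hE
    by_cases h0 : k - (T.m2+T.m3+1) = 0
    · rw [h0, T.h20] at hE; exact absurd hE.symm (T.c4_ne_v hi1 (by omega))
    · by_cases hm : k - (T.m2+T.m3+1) = T.m2
      · rw [hm, T.h2m] at hE; exact absurd hE.symm (T.c4_ne_w hi2)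
      · exact absurd hE (T.d24 _ i (by omega) (by omega) hi1 hi2)
  · rw [T.E4 h.1 h.2] at hE
    have := T.inj4 _ (by omega) _ (by omega) hE; omega
  · rw [T.E5 h.1 h.2] at hE
    by_cases h0 : 3*T.m2+T.m3+T.m4+2 - k = 0
    · rw [h0, T.h20] at hE; exact absurd hE.symm (T.c4_ne_v hi1 (by omega))
    · by_cases hm : 3*T.m2+T.m3+T.m4+2 - k = T.m2
      · rw [hm, T.h2m] at hE; exact absurd hE.symm (T.c4_ne_w hi2)
      · exact absurd hE (T.d24 _ i (by omega) (by omega) hi1 hi2)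
  · rw [T.E6 h.1 h.2] at hE
    by_cases h0 : k - (3*T.m2+T.m3+T.m4+2) = 0
    · rw [h0, T.h30] at hE; exact absurd hE.symm (T.c4_ne_v hi1 (by omega))
    · by_cases hm : k - (3*T.m2+T.m3+T.m4+2) = T.m3
      · rw [hm, T.h3m] at hE; exact absurd hE.symm (T.c4_ne_w hi2)
      · exact absurd hE (T.d34 _ i (by omega) (by omega) hi1 hi2)
  · rw [T.E7 h.1 h.2] at hE
    by_cases h0 : k - (3*T.m2+2*T.m3+T.m4+3) = 0
    · rw [h0, T.h20] at hE; exact absurd hE.symm (T.c4_ne_v hi1 (by omega))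
    · by_cases hm : k - (3*T.m2+2*T.m3+T.m4+3) = T.m2
      · rw [hm, T.h2m] at hE; exact absurd hE.symm (T.c4_ne_w hi2)
      · exact absurd hE (T.d24 _ i (by omega) (by omega) hi1 hi2)
  · rw [T.E8 h.1 h.2] at hE
    have := T.inj4 _ (by omega) _ (by omega) hE; omega
  · rw [T.E9 (by omega)] at hE
    exact absurd hE.symm (T.c4_ne_w hi2)

section Trajectories
variable [DecidableEq V]

lemma pos_step {h P Q : V} {a bb : ℕ} (hP : T.pos h a = P) (hab : bb = a + 1)
    (hr1 : T.r bb = P) (hr0 : T.r a = Q) : T.pos h bb = Q := by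
  subst hab
  rw [T.pos_move (hP.trans hr1.symm)]
  exact hr0

-- ===== class v =====
lemma posv_a {k : ℕ} (h2 : k ≤ T.m2 - 1) : T.pos T.v k = T.v := by
  have hm2 := T.hm2; have hm3 := T.hm3; have hm4 := T.hm4
  exact T.pos_const T.vw (T.pos_zero T.v) (by omega)
    (fun j hj1 hj2 hE => by have := T.AV_v (by omega) hE; omega)

lemma posv_t1 : T.pos T.v T.m2 = T.c2 1 := by
  have hm2 := T.hm2; have hm3 := T.hm3; have hm4 := T.hm4
  refine T.pos_step (T.posv_a (le_refl _)) (by omega) ?_ ?_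
  · rw [T.E1 (by omega), (show T.m2 - T.m2 = 0 by omega), T.h20]
  · rw [T.E1 (by omega)]; congr 1; omega

lemma posv_b {k : ℕ} (h1 : T.m2 ≤ k) (h2 : k ≤ T.m2+T.m3+1) :
    T.pos T.v k = T.c2 1 := by
  have hm2 := T.hm2; have hm3 := T.hm3; have hm4 := T.hm4
  exact T.pos_const T.vw T.posv_t1 h1
    (fun j hj1 hj2 hE => by have := T.AV_c2 (by omega) (by omega) (by omega) hE; omega)

lemma posv_t3 : T.pos T.v (T.m2+T.m3+2) = T.v := by
  have hm2 := T.hm2; have hm3 := T.hm3; have hm4 := T.hm4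
  refine T.pos_step (T.posv_b (k := T.m2+T.m3+1) (by omega) (by omega)) (by omega) ?_ ?_
  · rw [T.E3 (by omega) (by omega)]; congr 1; omega
  · rw [T.E3 (by omega) (by omega), (show T.m2+T.m3+1 - (T.m2+T.m3+1) = 0 by omega), T.h20]

lemma posv_c {k : ℕ} (h1 : T.m2+T.m3+2 ≤ k) (h2 : k ≤ 2*T.m2+T.m3+1) :
    T.pos T.v k = T.v := by
  have hm2 := T.hm2; have hm3 := T.hm3; have hm4 := T.hm4
  exact T.pos_const T.vw T.posv_t3 h1
    (fun j hj1 hj2 hE => by have := T.AV_v (by omega) hE; omega)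

lemma posv_t5 : T.pos T.v (2*T.m2+T.m3+2) = T.w := by
  have hm2 := T.hm2; have hm3 := T.hm3; have hm4 := T.hm4
  refine T.pos_step (T.posv_c (k := 2*T.m2+T.m3+1) (by omega) (by omega)) (by omega) ?_ ?_
  · rw [T.E4 (by omega) (by omega), (show 2*T.m2+T.m3+2 - (2*T.m2+T.m3+2) = 0 by omega), T.h40]
  · rw [T.E3 (by omega) (by omega), (show 2*T.m2+T.m3+1 - (T.m2+T.m3+1) = T.m2 by omega), T.h2m]

lemma posv_d {k : ℕ} (h1 : 2*T.m2+T.m3+2 ≤ k) (h2 : k ≤ 2*T.m2+T.m3+T.m4+1) :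
    T.pos T.v k = T.w := by
  have hm2 := T.hm2; have hm3 := T.hm3; have hm4 := T.hm4
  exact T.pos_const T.vw T.posv_t5 h1
    (fun j hj1 hj2 hE => by have := T.AV_w (by omega) hE; omega)

lemma posv_t6 : T.pos T.v (2*T.m2+T.m3+T.m4+2) = T.c4 (T.m4 - 1) := by
  have hm2 := T.hm2; have hm3 := T.hm3; have hm4 := T.hm4
  refine T.pos_step (T.posv_d (k := 2*T.m2+T.m3+T.m4+1) (by omega) (by omega)) (by omega) ?_ ?_
  · rw [T.E4 (by omega) (by omega), (show 2*T.m2+T.m3+T.m4+2 - (2*T.m2+T.m3+2) = T.m4 by omega), T.h4m]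
  · rw [T.E4 (by omega) (by omega)]; congr 1; omega

lemma posv_e {k : ℕ} (h1 : 2*T.m2+T.m3+T.m4+2 ≤ k) (h2 : k ≤ 4*T.m2+2*T.m3+T.m4+3) :
    T.pos T.v k = T.c4 (T.m4 - 1) := by
  have hm2 := T.hm2; have hm3 := T.hm3; have hm4 := T.hm4
  exact T.pos_const T.vw T.posv_t6 h1
    (fun j hj1 hj2 hE => by have := T.AV_c4 (by omega) (by omega) (by omega) hE; omega)

lemma posv_t10 : T.pos T.v (4*T.m2+2*T.m3+T.m4+4) = T.w := by
  have hm2 := T.hm2; have hm3 := T.hm3; have hm4 := T.hm4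
  refine T.pos_step (T.posv_e (k := 4*T.m2+2*T.m3+T.m4+3) (by omega) (by omega)) (by omega) ?_ ?_
  · rw [T.E8 (by omega) (by omega)]; congr 1; omega
  · rw [T.E7 (by omega) (by omega), (show 4*T.m2+2*T.m3+T.m4+3 - (3*T.m2+2*T.m3+T.m4+3) = T.m2 by omega), T.h2m]

lemma posv_f {k : ℕ} (h1 : 4*T.m2+2*T.m3+T.m4+4 ≤ k) (h2 : k ≤ 4*T.m2+2*T.m3+2*T.m4+3) :
    T.pos T.v k = T.w := by
  have hm2 := T.hm2; have hm3 := T.hm3; have hm4 := T.hm4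
  exact T.pos_const T.vw T.posv_t10 h1
    (fun j hj1 hj2 hE => by have := T.AV_w (by omega) hE; omega)

lemma posv_t12 : T.pos T.v (4*T.m2+2*T.m3+2*T.m4+4) = T.v := by
  have hm2 := T.hm2; have hm3 := T.hm3; have hm4 := T.hm4
  refine T.pos_step (T.posv_f (k := 4*T.m2+2*T.m3+2*T.m4+3) (by omega) (by omega)) (by omega) ?_ ?_
  · rw [T.E9 (by omega)]
  · rw [T.E8 (by omega) (by omega), (show 4*T.m2+2*T.m3+2*T.m4+3 - (4*T.m2+2*T.m3+2*T.m4+3) = 0 by omega), T.h40]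

-- ===== class y2 = c2 (m2-1) =====
lemma posy_t0 : T.pos (T.c2 (T.m2-1)) 1 = T.w := by
  have hm2 := T.hm2; have hm3 := T.hm3; have hm4 := T.hm4
  refine T.pos_step (T.pos_zero _) (by omega) ?_ ?_
  · rw [T.E1 (by omega)]
  · exact T.r_zero

lemma posy_a {k : ℕ} (h1 : 1 ≤ k) (h2 : k ≤ T.m2) : T.pos (T.c2 (T.m2-1)) k = T.w := by
  have hm2 := T.hm2; have hm3 := T.hm3; have hm4 := T.hm4
  exact T.pos_const (T.c2_ne_w (by omega)) T.posy_t0 h1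
    (fun j hj1 hj2 hE => by have := T.AV_w (by omega) hE; omega)

lemma posy_t2 : T.pos (T.c2 (T.m2-1)) (T.m2+1) = T.v := by
  have hm2 := T.hm2; have hm3 := T.hm3; have hm4 := T.hm4
  refine T.pos_step (T.posy_a (k := T.m2) (by omega) (by omega)) (by omega) ?_ ?_
  · rw [T.E2 (by omega) (by omega), (show T.m2+T.m3+1 - (T.m2+1) = T.m3 by omega), T.h3m]
  · rw [T.E1 (by omega), (show T.m2 - T.m2 = 0 by omega), T.h20]

lemma posy_b {k : ℕ} (h1 : T.m2+1 ≤ k) (h2 : k ≤ T.m2+T.m3) :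
    T.pos (T.c2 (T.m2-1)) k = T.v := by
  have hm2 := T.hm2; have hm3 := T.hm3; have hm4 := T.hm4
  exact T.pos_const (T.c2_ne_w (by omega)) T.posy_t2 h1
    (fun j hj1 hj2 hE => by have := T.AV_v (by omega) hE; omega)

lemma posy_t3 : T.pos (T.c2 (T.m2-1)) (T.m2+T.m3+1) = T.c3 1 := by
  have hm2 := T.hm2; have hm3 := T.hm3; have hm4 := T.hm4
  refine T.pos_step (T.posy_b (k := T.m2+T.m3) (by omega) (by omega)) (by omega) ?_ ?_
  · rw [T.E2 (by omega) (by omega), (show T.m2+T.m3+1 - (T.m2+T.m3+1) = 0 by omega), T.h30]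
  · rw [T.E2 (by omega) (by omega)]; congr 1; omega

lemma posy_c {k : ℕ} (h1 : T.m2+T.m3+1 ≤ k) (h2 : k ≤ 3*T.m2+T.m3+T.m4+2) :
    T.pos (T.c2 (T.m2-1)) k = T.c3 1 := by
  have hm2 := T.hm2; have hm3 := T.hm3; have hm4 := T.hm4
  exact T.pos_const (T.c2_ne_w (by omega)) T.posy_t3 h1
    (fun j hj1 hj2 hE => by have := T.AV_c3 (by omega) (by omega) (by omega) hE; omega)

lemma posy_t7 : T.pos (T.c2 (T.m2-1)) (3*T.m2+T.m3+T.m4+3) = T.v := by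
  have hm2 := T.hm2; have hm3 := T.hm3; have hm4 := T.hm4
  refine T.pos_step (T.posy_c (k := 3*T.m2+T.m3+T.m4+2) (by omega) (by omega)) (by omega) ?_ ?_
  · rw [T.E6 (by omega) (by omega)]; congr 1; omega
  · rw [T.E6 (by omega) (by omega), (show 3*T.m2+T.m3+T.m4+2 - (3*T.m2+T.m3+T.m4+2) = 0 by omega), T.h30]

lemma posy_d {k : ℕ} (h1 : 3*T.m2+T.m3+T.m4+3 ≤ k) (h2 : k ≤ 3*T.m2+2*T.m3+T.m4+2) :
    T.pos (T.c2 (T.m2-1)) k = T.v := by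
  have hm2 := T.hm2; have hm3 := T.hm3; have hm4 := T.hm4
  exact T.pos_const (T.c2_ne_w (by omega)) T.posy_t7 h1
    (fun j hj1 hj2 hE => by have := T.AV_v (by omega) hE; omega)

lemma posy_t9 : T.pos (T.c2 (T.m2-1)) (3*T.m2+2*T.m3+T.m4+3) = T.w := by
  have hm2 := T.hm2; have hm3 := T.hm3; have hm4 := T.hm4
  refine T.pos_step (T.posy_d (k := 3*T.m2+2*T.m3+T.m4+2) (by omega) (by omega)) (by omega) ?_ ?_
  · rw [T.E7 (by omega) (by omega), (show 3*T.m2+2*T.m3+T.m4+3 - (3*T.m2+2*T.m3+T.m4+3) = 0 by omega), T.h20]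
  · rw [T.E6 (by omega) (by omega), (show 3*T.m2+2*T.m3+T.m4+2 - (3*T.m2+T.m3+T.m4+2) = T.m3 by omega), T.h3m]

lemma posy_e {k : ℕ} (h1 : 3*T.m2+2*T.m3+T.m4+3 ≤ k) (h2 : k ≤ 4*T.m2+2*T.m3+T.m4+2) :
    T.pos (T.c2 (T.m2-1)) k = T.w := by
  have hm2 := T.hm2; have hm3 := T.hm3; have hm4 := T.hm4
  exact T.pos_const (T.c2_ne_w (by omega)) T.posy_t9 h1
    (fun j hj1 hj2 hE => by have := T.AV_w (by omega) hE; omega)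

lemma posy_t10 : T.pos (T.c2 (T.m2-1)) (4*T.m2+2*T.m3+T.m4+3) = T.c2 (T.m2-1) := by
  have hm2 := T.hm2; have hm3 := T.hm3; have hm4 := T.hm4
  refine T.pos_step (T.posy_e (k := 4*T.m2+2*T.m3+T.m4+2) (by omega) (by omega)) (by omega) ?_ ?_
  · rw [T.E7 (by omega) (by omega), (show 4*T.m2+2*T.m3+T.m4+3 - (3*T.m2+2*T.m3+T.m4+3) = T.m2 by omega), T.h2m]
  · rw [T.E7 (by omega) (by omega)]; congr 1; omega

lemma posy_f {k : ℕ} (h1 : 4*T.m2+2*T.m3+T.m4+3 ≤ k) (h2 : k ≤ 4*T.m2+2*T.m3+2*T.m4+4) :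
    T.pos (T.c2 (T.m2-1)) k = T.c2 (T.m2-1) := by
  have hm2 := T.hm2; have hm3 := T.hm3; have hm4 := T.hm4
  exact T.pos_const (T.c2_ne_w (by omega)) T.posy_t10 h1
    (fun j hj1 hj2 hE => by have := T.AV_c2 (by omega) (by omega) (by omega) hE; omega)

-- ===== generic middle class of P2: 1 ≤ j ≤ m2-2 =====
lemma final_c2 {j : ℕ} (hj1 : 1 ≤ j) (hj2 : j ≤ T.m2 - 2) :
    T.pos (T.c2 j) (4*T.m2+2*T.m3+2*T.m4+4) = T.c2 j := by
  have hm2 := T.hm2; have hm3 := T.hm3; have hm4 := T.hm4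
  have A1 : T.pos (T.c2 j) (T.m2 - j - 1) = T.c2 j :=
    T.pos_const (T.c2_ne_w (by omega)) (T.pos_zero _) (by omega)
      (fun l hl1 hl2 hE => by have := T.AV_c2 (by omega) (by omega) (by omega) hE; omega)
  have A2 : T.pos (T.c2 j) (T.m2 - j) = T.c2 (j+1) :=
    T.pos_step A1 (by omega) (by rw [T.E1 (by omega)]; congr 1; omega)
      (by rw [T.E1 (by omega)]; congr 1; omega)
  have A3 : T.pos (T.c2 j) (T.m2+T.m3+1+j) = T.c2 (j+1) :=
    T.pos_const (T.c2_ne_w (by omega)) A2 (by omega)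
      (fun l hl1 hl2 hE => by have := T.AV_c2 (by omega) (by omega) (by omega) hE; omega)
  have A4 : T.pos (T.c2 j) (T.m2+T.m3+1+j+1) = T.c2 j :=
    T.pos_step A3 (by omega) (by rw [T.E3 (by omega) (by omega)]; congr 1; omega)
      (by rw [T.E3 (by omega) (by omega)]; congr 1; omega)
  have A5 : T.pos (T.c2 j) (3*T.m2+T.m3+T.m4+2-j-1) = T.c2 j :=
    T.pos_const (T.c2_ne_w (by omega)) A4 (by omega)
      (fun l hl1 hl2 hE => by have := T.AV_c2 (by omega) (by omega) (by omega) hE; omega)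
  have A6 : T.pos (T.c2 j) (3*T.m2+T.m3+T.m4+2-j) = T.c2 (j+1) :=
    T.pos_step A5 (by omega) (by rw [T.E5 (by omega) (by omega)]; congr 1; omega)
      (by rw [T.E5 (by omega) (by omega)]; congr 1; omega)
  have A7 : T.pos (T.c2 j) (3*T.m2+2*T.m3+T.m4+3+j) = T.c2 (j+1) :=
    T.pos_const (T.c2_ne_w (by omega)) A6 (by omega)
      (fun l hl1 hl2 hE => by have := T.AV_c2 (by omega) (by omega) (by omega) hE; omega)
  have A8 : T.pos (T.c2 j) (3*T.m2+2*T.m3+T.m4+3+j+1) = T.c2 j :=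
    T.pos_step A7 (by omega) (by rw [T.E7 (by omega) (by omega)]; congr 1; omega)
      (by rw [T.E7 (by omega) (by omega)]; congr 1; omega)
  exact T.pos_const (T.c2_ne_w (by omega)) A8 (by omega)
    (fun l hl1 hl2 hE => by have := T.AV_c2 (by omega) (by omega) (by omega) hE; omega)

-- ===== generic middle class of P3: 1 ≤ j ≤ m3-2 =====
lemma final_c3 {j : ℕ} (hj1 : 1 ≤ j) (hj2 : j ≤ T.m3 - 2) :
    T.pos (T.c3 j) (4*T.m2+2*T.m3+2*T.m4+4) = T.c3 j := by
  have hm2 := T.hm2; have hm3 := T.hm3; have hm4 := T.hm4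
  have B1 : T.pos (T.c3 j) (T.m2+T.m3+1-j-1) = T.c3 j :=
    T.pos_const (T.c3_ne_w (by omega)) (T.pos_zero _) (by omega)
      (fun l hl1 hl2 hE => by have := T.AV_c3 (by omega) (by omega) (by omega) hE; omega)
  have B2 : T.pos (T.c3 j) (T.m2+T.m3+1-j) = T.c3 (j+1) :=
    T.pos_step B1 (by omega) (by rw [T.E2 (by omega) (by omega)]; congr 1; omega)
      (by rw [T.E2 (by omega) (by omega)]; congr 1; omega)
  have B3 : T.pos (T.c3 j) (3*T.m2+T.m3+T.m4+2+j) = T.c3 (j+1) :=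
    T.pos_const (T.c3_ne_w (by omega)) B2 (by omega)
      (fun l hl1 hl2 hE => by have := T.AV_c3 (by omega) (by omega) (by omega) hE; omega)
  have B4 : T.pos (T.c3 j) (3*T.m2+T.m3+T.m4+2+j+1) = T.c3 j :=
    T.pos_step B3 (by omega) (by rw [T.E6 (by omega) (by omega)]; congr 1; omega)
      (by rw [T.E6 (by omega) (by omega)]; congr 1; omega)
  exact T.pos_const (T.c3_ne_w (by omega)) B4 (by omega)
    (fun l hl1 hl2 hE => by have := T.AV_c3 (by omega) (by omega) (by omega) hE; omega)

-- ===== class y3 = c3 (m3-1) =====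
lemma final_y3 : T.pos (T.c3 (T.m3-1)) (4*T.m2+2*T.m3+2*T.m4+4) = T.c3 (T.m3-1) := by
  have hm2 := T.hm2; have hm3 := T.hm3; have hm4 := T.hm4
  have C1 : T.pos (T.c3 (T.m3-1)) (T.m2+1) = T.c3 (T.m3-1) :=
    T.pos_const (T.c3_ne_w (by omega)) (T.pos_zero _) (by omega)
      (fun l hl1 hl2 hE => by have := T.AV_c3 (by omega) (by omega) (by omega) hE; omega)
  have C2 : T.pos (T.c3 (T.m3-1)) (T.m2+2) = T.w :=
    T.pos_step C1 (by omega) (by rw [T.E2 (by omega) (by omega)]; congr 1; omega)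
      (by rw [T.E2 (by omega) (by omega), (show T.m2+T.m3+1 - (T.m2+1) = T.m3 by omega), T.h3m])
  have C3 : T.pos (T.c3 (T.m3-1)) (2*T.m2+T.m3) = T.w :=
    T.pos_const (T.c3_ne_w (by omega)) C2 (by omega)
      (fun l hl1 hl2 hE => by have := T.AV_w (by omega) hE; omega)
  have C4 : T.pos (T.c3 (T.m3-1)) (2*T.m2+T.m3+1) = T.c2 (T.m2-1) :=
    T.pos_step C3 (by omega)
      (by rw [T.E3 (by omega) (by omega), (show 2*T.m2+T.m3+1 - (T.m2+T.m3+1) = T.m2 by omega), T.h2m])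
      (by rw [T.E3 (by omega) (by omega)]; congr 1; omega)
  have C5 : T.pos (T.c3 (T.m3-1)) (2*T.m2+T.m3+T.m4+2) = T.c2 (T.m2-1) :=
    T.pos_const (T.c3_ne_w (by omega)) C4 (by omega)
      (fun l hl1 hl2 hE => by have := T.AV_c2 (by omega) (by omega) (by omega) hE; omega)
  have C6 : T.pos (T.c3 (T.m3-1)) (2*T.m2+T.m3+T.m4+3) = T.w :=
    T.pos_step C5 (by omega) (by rw [T.E5 (by omega) (by omega)]; congr 1; omega)
      (by rw [T.E5 (by omega) (by omega), (show 3*T.m2+T.m3+T.m4+2 - (2*T.m2+T.m3+T.m4+2) = T.m2 by omega), T.h2m])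
  have C7 : T.pos (T.c3 (T.m3-1)) (3*T.m2+2*T.m3+T.m4+1) = T.w :=
    T.pos_const (T.c3_ne_w (by omega)) C6 (by omega)
      (fun l hl1 hl2 hE => by have := T.AV_w (by omega) hE; omega)
  have C8 : T.pos (T.c3 (T.m3-1)) (3*T.m2+2*T.m3+T.m4+2) = T.c3 (T.m3-1) :=
    T.pos_step C7 (by omega)
      (by rw [T.E6 (by omega) (by omega), (show 3*T.m2+2*T.m3+T.m4+2 - (3*T.m2+T.m3+T.m4+2) = T.m3 by omega), T.h3m])
      (by rw [T.E6 (by omega) (by omega)]; congr 1; omega)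
  exact T.pos_const (T.c3_ne_w (by omega)) C8 (by omega)
    (fun l hl1 hl2 hE => by have := T.AV_c3 (by omega) (by omega) (by omega) hE; omega)

-- ===== class c4 1 =====
lemma final_c41 : T.pos (T.c4 1) (4*T.m2+2*T.m3+2*T.m4+4) = T.c4 1 := by
  have hm2 := T.hm2; have hm3 := T.hm3; have hm4 := T.hm4
  have D1 : T.pos (T.c4 1) (2*T.m2+T.m3+2) = T.c4 1 :=
    T.pos_const (T.c4_ne_w (by omega)) (T.pos_zero _) (by omega)
      (fun l hl1 hl2 hE => by have := T.AV_c4 (by omega) (by omega) (by omega) hE; omega)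
  have D2 : T.pos (T.c4 1) (2*T.m2+T.m3+3) = T.v :=
    T.pos_step D1 (by omega) (by rw [T.E4 (by omega) (by omega)]; congr 1; omega)
      (by rw [T.E4 (by omega) (by omega), (show 2*T.m2+T.m3+2 - (2*T.m2+T.m3+2) = 0 by omega), T.h40])
  have D3 : T.pos (T.c4 1) (3*T.m2+T.m3+T.m4+1) = T.v :=
    T.pos_const (T.c4_ne_w (by omega)) D2 (by omega)
      (fun l hl1 hl2 hE => by have := T.AV_v (by omega) hE; omega)
  have D4 : T.pos (T.c4 1) (3*T.m2+T.m3+T.m4+2) = T.c2 1 :=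
    T.pos_step D3 (by omega)
      (by rw [T.E5 (by omega) (by omega), (show 3*T.m2+T.m3+T.m4+2 - (3*T.m2+T.m3+T.m4+2) = 0 by omega), T.h20])
      (by rw [T.E5 (by omega) (by omega)]; congr 1; omega)
  have D5 : T.pos (T.c4 1) (3*T.m2+2*T.m3+T.m4+3) = T.c2 1 :=
    T.pos_const (T.c4_ne_w (by omega)) D4 (by omega)
      (fun l hl1 hl2 hE => by have := T.AV_c2 (by omega) (by omega) (by omega) hE; omega)
  have D6 : T.pos (T.c4 1) (3*T.m2+2*T.m3+T.m4+4) = T.v :=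
    T.pos_step D5 (by omega) (by rw [T.E7 (by omega) (by omega)]; congr 1; omega)
      (by rw [T.E7 (by omega) (by omega), (show 3*T.m2+2*T.m3+T.m4+3 - (3*T.m2+2*T.m3+T.m4+3) = 0 by omega), T.h20])
  have D7 : T.pos (T.c4 1) (4*T.m2+2*T.m3+2*T.m4+2) = T.v :=
    T.pos_const (T.c4_ne_w (by omega)) D6 (by omega)
      (fun l hl1 hl2 hE => by have := T.AV_v (by omega) hE; omega)
  have D8 : T.pos (T.c4 1) (4*T.m2+2*T.m3+2*T.m4+3) = T.c4 1 :=
    T.pos_step D7 (by omega)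
      (by rw [T.E8 (by omega) (by omega), (show 4*T.m2+2*T.m3+2*T.m4+3 - (4*T.m2+2*T.m3+2*T.m4+3) = 0 by omega), T.h40])
      (by rw [T.E8 (by omega) (by omega)]; congr 1; omega)
  exact T.pos_const (T.c4_ne_w (by omega)) D8 (by omega)
    (fun l hl1 hl2 hE => by have := T.AV_c4 (by omega) (by omega) (by omega) hE; omega)

-- ===== class c4 j, 2 ≤ j ≤ m4-1 =====
lemma final_c4 {j : ℕ} (hj1 : 2 ≤ j) (hj2 : j ≤ T.m4 - 1) :
    T.pos (T.c4 j) (4*T.m2+2*T.m3+2*T.m4+4) = T.c4 j := by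
  have hm2 := T.hm2; have hm3 := T.hm3; have hm4 := T.hm4
  have F1 : T.pos (T.c4 j) (2*T.m2+T.m3+2+j-1) = T.c4 j :=
    T.pos_const (T.c4_ne_w (by omega)) (T.pos_zero _) (by omega)
      (fun l hl1 hl2 hE => by have := T.AV_c4 (by omega) (by omega) (by omega) hE; omega)
  have F2 : T.pos (T.c4 j) (2*T.m2+T.m3+2+j) = T.c4 (j-1) :=
    T.pos_step F1 (by omega) (by rw [T.E4 (by omega) (by omega)]; congr 1; omega)
      (by rw [T.E4 (by omega) (by omega)]; congr 1; omega)
  have F3 : T.pos (T.c4 j) (4*T.m2+2*T.m3+2*T.m4+3-j) = T.c4 (j-1) :=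
    T.pos_const (T.c4_ne_w (by omega)) F2 (by omega)
      (fun l hl1 hl2 hE => by have := T.AV_c4 (by omega) (by omega) (by omega) hE; omega)
  have F4 : T.pos (T.c4 j) (4*T.m2+2*T.m3+2*T.m4+3-j+1) = T.c4 j :=
    T.pos_step F3 (by omega) (by rw [T.E8 (by omega) (by omega)]; congr 1; omega)
      (by rw [T.E8 (by omega) (by omega)]; congr 1; omega)
  exact T.pos_const (T.c4_ne_w (by omega)) F4 (by omega)
    (fun l hl1 hl2 hE => by have := T.AV_c4 (by omega) (by omega) (by omega) hE; omega)

lemma pos_final : ∀ x : V, T.pos x (4*T.m2+2*T.m3+2*T.m4+4) = x := by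
  have hm2 := T.hm2; have hm3 := T.hm3; have hm4 := T.hm4
  intro x
  rcases T.cover x with rfl | rfl | ⟨j, hj1, hj2, rfl⟩ | ⟨j, hj1, hj2, rfl⟩ | ⟨j, hj1, hj2, rfl⟩
  · exact T.posv_t12
  · rw [T.pos_w, T.E9 (le_refl _)]
  · by_cases hj : j = T.m2 - 1
    · subst hj; exact T.posy_f (by omega) (by omega)
    · exact T.final_c2 (by omega) (by omega)
  · by_cases hj : j = T.m3 - 1
    · subst hj; exact T.final_y3
    · exact T.final_c3 (by omega) (by omega)
  · by_cases hj : j = 1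
    · subst hj; exact T.final_c41
    · exact T.final_c4 (by omega) (by omega)

lemma b_final : T.b (4*T.m2+2*T.m3+2*T.m4+4) = 1 := by
  rw [← inv_eq_one]
  apply Equiv.ext
  intro x
  have := T.pos_final x
  rw [pos] at this
  simpa using this

end Trajectories

/-- Signature tables. -/
def PA : ℕ → ℕ
  | 0 => 0 | 1 => 0 | 2 => 2 | 3 => 2 | 4 => 2 | 5 => 0
  | 6 => 1 | 7 => 4 | 8 => 4 | 9 => 4 | 10 => 4 | _ => 1

def PB : ℕ → ℕ
  | 0 => 2 | 1 => 1 | 2 => 1 | 3 => 0 | 4 => 3 | 5 => 3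
  | 6 => 3 | 7 => 3 | 8 => 0 | 9 => 1 | 10 => 2 | _ => 2

lemma pair_inj : ∀ a < 12, ∀ b < 12, PA a = PA b → PB a = PB b → a = b := by decide

open Classical in
/-- Vertex class tag. -/
noncomputable def tag (x : V) : ℕ :=
  if x = T.v then 0
  else if x = T.w then 1
  else if ∃ j, 0 < j ∧ j < T.m2 ∧ x = T.c2 j then 2
  else if ∃ j, 0 < j ∧ j < T.m3 ∧ x = T.c3 j then 3
  else 4

lemma tag_v : T.tag T.v = 0 := by rw [tag, if_pos rfl]

lemma tag_w : T.tag T.w = 1 := by rw [tag, if_neg (Ne.symm T.vw), if_pos rfl]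

lemma tag_c2 {i : ℕ} (h1 : 0 < i) (h2 : i < T.m2) : T.tag (T.c2 i) = 2 := by
  rw [tag, if_neg (T.c2_ne_v h1 (by omega)), if_neg (T.c2_ne_w h2),
    if_pos ⟨i, h1, h2, rfl⟩]

lemma tag_c3 {i : ℕ} (h1 : 0 < i) (h2 : i < T.m3) : T.tag (T.c3 i) = 3 := by
  rw [tag, if_neg (T.c3_ne_v h1 (by omega)), if_neg (T.c3_ne_w h2), if_neg, if_pos ⟨i, h1, h2, rfl⟩]
  rintro ⟨j, hj1, hj2, hE⟩
  exact T.d23 j i hj1 hj2 h1 h2 hE.symm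

lemma tag_c4 {i : ℕ} (h1 : 0 < i) (h2 : i < T.m4) : T.tag (T.c4 i) = 4 := by
  rw [tag, if_neg (T.c4_ne_v h1 (by omega)), if_neg (T.c4_ne_w h2), if_neg, if_neg]
  · rintro ⟨j, hj1, hj2, hE⟩
    exact T.d34 j i hj1 hj2 h1 h2 hE.symm
  · rintro ⟨j, hj1, hj2, hE⟩
    exact T.d24 j i hj1 hj2 h1 h2 hE.symm

/-- Phase function. -/
def phase (k : ℕ) : ℕ :=
  if k = 0 then 0
  else if k ≤ T.m2-1 then 1
  else if k ≤ T.m2 then 2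
  else if k ≤ T.m2+T.m3 then 3
  else if k ≤ T.m2+T.m3+1 then 4
  else if k ≤ 2*T.m2+T.m3+1 then 5
  else if k ≤ 2*T.m2+T.m3+T.m4+1 then 6
  else if k ≤ 3*T.m2+T.m3+T.m4+2 then 7
  else if k ≤ 3*T.m2+2*T.m3+T.m4+2 then 8
  else if k ≤ 4*T.m2+2*T.m3+T.m4+2 then 9
  else if k ≤ 4*T.m2+2*T.m3+T.m4+3 then 10
  else 11

lemma ph_eval {k : ℕ} :
    (k = 0 → T.phase k = 0) ∧
    (1 ≤ k ∧ k ≤ T.m2-1 → T.phase k = 1) ∧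
    (T.m2-1 < k ∧ k ≤ T.m2 → T.phase k = 2) ∧
    (T.m2+1 ≤ k ∧ k ≤ T.m2+T.m3 → T.phase k = 3) ∧
    (T.m2+T.m3 < k ∧ k ≤ T.m2+T.m3+1 → T.phase k = 4) ∧
    (T.m2+T.m3+2 ≤ k ∧ k ≤ 2*T.m2+T.m3+1 → T.phase k = 5) ∧
    (2*T.m2+T.m3+2 ≤ k ∧ k ≤ 2*T.m2+T.m3+T.m4+1 → T.phase k = 6) ∧
    (2*T.m2+T.m3+T.m4+2 ≤ k ∧ k ≤ 3*T.m2+T.m3+T.m4+2 → T.phase k = 7) ∧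
    (3*T.m2+T.m3+T.m4+3 ≤ k ∧ k ≤ 3*T.m2+2*T.m3+T.m4+2 → T.phase k = 8) ∧
    (3*T.m2+2*T.m3+T.m4+3 ≤ k ∧ k ≤ 4*T.m2+2*T.m3+T.m4+2 → T.phase k = 9) ∧
    (4*T.m2+2*T.m3+T.m4+2 < k ∧ k ≤ 4*T.m2+2*T.m3+T.m4+3 → T.phase k = 10) ∧
    (4*T.m2+2*T.m3+T.m4+4 ≤ k → T.phase k = 11) := by
  have hm2 := T.hm2; have hm3 := T.hm3; have hm4 := T.hm4
  refine ⟨?_, ?_, ?_, ?_, ?_, ?_, ?_, ?_, ?_, ?_, ?_, ?_⟩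
  · intro h; rw [phase, if_pos h]
  · intro ⟨h1, h2⟩; rw [phase, if_neg (by omega), if_pos h2]
  · intro ⟨h1, h2⟩; rw [phase, if_neg (by omega), if_neg (by omega), if_pos h2]
  · intro ⟨h1, h2⟩
    rw [phase, if_neg (by omega), if_neg (by omega), if_neg (by omega), if_pos h2]
  · intro ⟨h1, h2⟩
    rw [phase, if_neg (by omega), if_neg (by omega), if_neg (by omega), if_neg (by omega),
      if_pos h2]
  · intro ⟨h1, h2⟩
    rw [phase, if_neg (by omega), if_neg (by omega), if_neg (by omega), if_neg (by omega),
      if_neg (by omega), if_pos h2]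
  · intro ⟨h1, h2⟩
    rw [phase, if_neg (by omega), if_neg (by omega), if_neg (by omega), if_neg (by omega),
      if_neg (by omega), if_neg (by omega), if_pos h2]
  · intro ⟨h1, h2⟩
    rw [phase, if_neg (by omega), if_neg (by omega), if_neg (by omega), if_neg (by omega),
      if_neg (by omega), if_neg (by omega), if_neg (by omega), if_pos h2]
  · intro ⟨h1, h2⟩
    rw [phase, if_neg (by omega), if_neg (by omega), if_neg (by omega), if_neg (by omega),
      if_neg (by omega), if_neg (by omega), if_neg (by omega), if_neg (by omega), if_pos h2]
  · intro ⟨h1, h2⟩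
    rw [phase, if_neg (by omega), if_neg (by omega), if_neg (by omega), if_neg (by omega),
      if_neg (by omega), if_neg (by omega), if_neg (by omega), if_neg (by omega),
      if_neg (by omega), if_pos h2]
  · intro ⟨h1, h2⟩
    rw [phase, if_neg (by omega), if_neg (by omega), if_neg (by omega), if_neg (by omega),
      if_neg (by omega), if_neg (by omega), if_neg (by omega), if_neg (by omega),
      if_neg (by omega), if_neg (by omega), if_pos h2]
  · intro h1
    rw [phase, if_neg (by omega), if_neg (by omega), if_neg (by omega), if_neg (by omega),
      if_neg (by omega), if_neg (by omega), if_neg (by omega), if_neg (by omega),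
      if_neg (by omega), if_neg (by omega), if_neg (by omega)]

lemma phase_lt (k : ℕ) : T.phase k < 12 := by
  have hm2 := T.hm2; have hm3 := T.hm3; have hm4 := T.hm4
  have hp := T.ph_eval (k := k)
  obtain ⟨p0,p1,p2,p3,p4,p5,p6,p7,p8,p9,p10,p11⟩ := hp
  rcases (by omega :
    k = 0 ∨ (1 ≤ k ∧ k ≤ T.m2-1) ∨ (T.m2-1 < k ∧ k ≤ T.m2) ∨ (T.m2+1 ≤ k ∧ k ≤ T.m2+T.m3) ∨
    (T.m2+T.m3 < k ∧ k ≤ T.m2+T.m3+1) ∨ (T.m2+T.m3+2 ≤ k ∧ k ≤ 2*T.m2+T.m3+1) ∨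
    (2*T.m2+T.m3+2 ≤ k ∧ k ≤ 2*T.m2+T.m3+T.m4+1) ∨
    (2*T.m2+T.m3+T.m4+2 ≤ k ∧ k ≤ 3*T.m2+T.m3+T.m4+2) ∨
    (3*T.m2+T.m3+T.m4+3 ≤ k ∧ k ≤ 3*T.m2+2*T.m3+T.m4+2) ∨
    (3*T.m2+2*T.m3+T.m4+3 ≤ k ∧ k ≤ 4*T.m2+2*T.m3+T.m4+2) ∨
    (4*T.m2+2*T.m3+T.m4+2 < k ∧ k ≤ 4*T.m2+2*T.m3+T.m4+3) ∨
    (4*T.m2+2*T.m3+T.m4+4 ≤ k)) with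
    h|h|h|h|h|h|h|h|h|h|h|h
  · rw [p0 h]; omega
  · rw [p1 h]; omega
  · rw [p2 h]; omega
  · rw [p3 h]; omega
  · rw [p4 h]; omega
  · rw [p5 h]; omega
  · rw [p6 h]; omega
  · rw [p7 h]; omega
  · rw [p8 h]; omega
  · rw [p9 h]; omega
  · rw [p10 h]; omega
  · rw [p11 h]; omega

lemma phase_spec {k : ℕ} (hk : k < 4*T.m2+2*T.m3+2*T.m4+4) :
    (T.phase k = 0 ∧ k = 0) ∨
    (T.phase k = 1 ∧ 1 ≤ k ∧ k ≤ T.m2-1) ∨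
    (T.phase k = 2 ∧ k = T.m2) ∨
    (T.phase k = 3 ∧ T.m2+1 ≤ k ∧ k ≤ T.m2+T.m3) ∨
    (T.phase k = 4 ∧ k = T.m2+T.m3+1) ∨
    (T.phase k = 5 ∧ T.m2+T.m3+2 ≤ k ∧ k ≤ 2*T.m2+T.m3+1) ∨
    (T.phase k = 6 ∧ 2*T.m2+T.m3+2 ≤ k ∧ k ≤ 2*T.m2+T.m3+T.m4+1) ∨
    (T.phase k = 7 ∧ 2*T.m2+T.m3+T.m4+2 ≤ k ∧ k ≤ 3*T.m2+T.m3+T.m4+2) ∨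
    (T.phase k = 8 ∧ 3*T.m2+T.m3+T.m4+3 ≤ k ∧ k ≤ 3*T.m2+2*T.m3+T.m4+2) ∨
    (T.phase k = 9 ∧ 3*T.m2+2*T.m3+T.m4+3 ≤ k ∧ k ≤ 4*T.m2+2*T.m3+T.m4+2) ∨
    (T.phase k = 10 ∧ k = 4*T.m2+2*T.m3+T.m4+3) ∨
    (T.phase k = 11 ∧ 4*T.m2+2*T.m3+T.m4+4 ≤ k ∧ k ≤ 4*T.m2+2*T.m3+2*T.m4+3) := by
  have hm2 := T.hm2; have hm3 := T.hm3; have hm4 := T.hm4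
  have hp := T.ph_eval (k := k)
  obtain ⟨p0,p1,p2,p3,p4,p5,p6,p7,p8,p9,p10,p11⟩ := hp
  rcases (by omega :
    k = 0 ∨ (1 ≤ k ∧ k ≤ T.m2-1) ∨ (T.m2-1 < k ∧ k ≤ T.m2) ∨ (T.m2+1 ≤ k ∧ k ≤ T.m2+T.m3) ∨
    (T.m2+T.m3 < k ∧ k ≤ T.m2+T.m3+1) ∨ (T.m2+T.m3+2 ≤ k ∧ k ≤ 2*T.m2+T.m3+1) ∨
    (2*T.m2+T.m3+2 ≤ k ∧ k ≤ 2*T.m2+T.m3+T.m4+1) ∨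
    (2*T.m2+T.m3+T.m4+2 ≤ k ∧ k ≤ 3*T.m2+T.m3+T.m4+2) ∨
    (3*T.m2+T.m3+T.m4+3 ≤ k ∧ k ≤ 3*T.m2+2*T.m3+T.m4+2) ∨
    (3*T.m2+2*T.m3+T.m4+3 ≤ k ∧ k ≤ 4*T.m2+2*T.m3+T.m4+2) ∨
    (4*T.m2+2*T.m3+T.m4+2 < k ∧ k ≤ 4*T.m2+2*T.m3+T.m4+3) ∨
    (4*T.m2+2*T.m3+T.m4+4 ≤ k)) with
    h|h|h|h|h|h|h|h|h|h|h|h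
  · exact .inl ⟨p0 h, h⟩
  · exact .inr (.inl ⟨p1 h, h⟩)
  · exact .inr (.inr (.inl ⟨p2 h, by omega⟩))
  · exact .inr (.inr (.inr (.inl ⟨p3 h, h⟩)))
  · exact .inr (.inr (.inr (.inr (.inl ⟨p4 h, by omega⟩))))
  · exact .inr (.inr (.inr (.inr (.inr (.inl ⟨p5 h, h⟩)))))
  · exact .inr (.inr (.inr (.inr (.inr (.inr (.inl ⟨p6 h, h⟩))))))
  · exact .inr (.inr (.inr (.inr (.inr (.inr (.inr (.inl ⟨p7 h, h⟩)))))))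
  · exact .inr (.inr (.inr (.inr (.inr (.inr (.inr (.inr (.inl ⟨p8 h, h⟩))))))))
  · exact .inr (.inr (.inr (.inr (.inr (.inr (.inr (.inr (.inr (.inl ⟨p9 h, h⟩)))))))))
  · exact .inr (.inr (.inr (.inr (.inr (.inr (.inr (.inr (.inr (.inr (.inl ⟨p10 h, by omega⟩))))))))))
  · exact .inr (.inr (.inr (.inr (.inr (.inr (.inr (.inr (.inr (.inr (.inr ⟨p11 h, by omega, by omega⟩))))))))))

section Sig
variable [DecidableEq V]

lemma sig {k : ℕ} (hk : k < 4*T.m2+2*T.m3+2*T.m4+4) :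
    T.tag (T.pos T.v k) = PA (T.phase k) ∧
    T.tag (T.pos (T.c2 (T.m2-1)) k) = PB (T.phase k) := by
  have hm2 := T.hm2; have hm3 := T.hm3; have hm4 := T.hm4
  rcases T.phase_spec hk with ⟨e,h⟩|⟨e,h1,h2⟩|⟨e,h⟩|⟨e,h1,h2⟩|⟨e,h⟩|⟨e,h1,h2⟩|⟨e,h1,h2⟩|
    ⟨e,h1,h2⟩|⟨e,h1,h2⟩|⟨e,h1,h2⟩|⟨e,h⟩|⟨e,h1,h2⟩ <;> rw [e] <;> subst_eqs
  · rw [T.posv_a (by omega), T.pos_zero, T.tag_v, T.tag_c2 (by omega) (by omega)]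
    exact ⟨rfl, rfl⟩
  · rw [T.posv_a (by omega), T.posy_a (by omega) (by omega), T.tag_v, T.tag_w]
    exact ⟨rfl, rfl⟩
  · rw [T.posv_t1, T.posy_a (by omega) (by omega), T.tag_c2 (by omega) (by omega), T.tag_w]
    exact ⟨rfl, rfl⟩
  · rw [T.posv_b (by omega) (by omega), T.posy_b (by omega) (by omega),
      T.tag_c2 (by omega) (by omega), T.tag_v]
    exact ⟨rfl, rfl⟩
  · rw [T.posv_b (by omega) (by omega), T.posy_t3, T.tag_c2 (by omega) (by omega),
      T.tag_c3 (by omega) (by omega)]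
    exact ⟨rfl, rfl⟩
  · rw [T.posv_c (by omega) (by omega), T.posy_c (by omega) (by omega), T.tag_v,
      T.tag_c3 (by omega) (by omega)]
    exact ⟨rfl, rfl⟩
  · rw [T.posv_d (by omega) (by omega), T.posy_c (by omega) (by omega), T.tag_w,
      T.tag_c3 (by omega) (by omega)]
    exact ⟨rfl, rfl⟩
  · rw [T.posv_e (by omega) (by omega), T.posy_c (by omega) (by omega),
      T.tag_c4 (by omega) (by omega), T.tag_c3 (by omega) (by omega)]
    exact ⟨rfl, rfl⟩
  · rw [T.posv_e (by omega) (by omega), T.posy_d (by omega) (by omega),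
      T.tag_c4 (by omega) (by omega), T.tag_v]
    exact ⟨rfl, rfl⟩
  · rw [T.posv_e (by omega) (by omega), T.posy_e (by omega) (by omega),
      T.tag_c4 (by omega) (by omega), T.tag_w]
    exact ⟨rfl, rfl⟩
  · rw [T.posv_e (by omega) (by omega), T.posy_t10, T.tag_c4 (by omega) (by omega),
      T.tag_c2 (by omega) (by omega)]
    exact ⟨rfl, rfl⟩
  · rw [T.posv_f (by omega) (by omega), T.posy_f (by omega) (by omega), T.tag_w,
      T.tag_c2 (by omega) (by omega)]
    exact ⟨rfl, rfl⟩

lemma r_injective {j k : ℕ} (hj : j < 4*T.m2+2*T.m3+2*T.m4+4)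
    (hk : k < 4*T.m2+2*T.m3+2*T.m4+4) (hp : T.phase j = T.phase k)
    (hr : T.r j = T.r k) : j = k := by
  have hm2 := T.hm2; have hm3 := T.hm3; have hm4 := T.hm4
  rcases T.phase_spec hj with ⟨e,h⟩|⟨e,h1,h2⟩|⟨e,h⟩|⟨e,h1,h2⟩|⟨e,h⟩|⟨e,h1,h2⟩|⟨e,h1,h2⟩|
    ⟨e,h1,h2⟩|⟨e,h1,h2⟩|⟨e,h1,h2⟩|⟨e,h⟩|⟨e,h1,h2⟩ <;>
    rcases T.phase_spec hk with ⟨f,g⟩|⟨f,g1,g2⟩|⟨f,g⟩|⟨f,g1,g2⟩|⟨f,g⟩|⟨f,g1,g2⟩|⟨f,g1,g2⟩|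
      ⟨f,g1,g2⟩|⟨f,g1,g2⟩|⟨f,g1,g2⟩|⟨f,g⟩|⟨f,g1,g2⟩ <;>
    first
      | omega
      | (rw [T.E1 (k := j) (by omega), T.E1 (k := k) (by omega)] at hr
         have := T.inj2 _ (by omega) _ (by omega) hr; omega)
      | (rw [T.E2 (k := j) (by omega) (by omega), T.E2 (k := k) (by omega) (by omega)] at hr
         have := T.inj3 _ (by omega) _ (by omega) hr; omega)
      | (rw [T.E3 (k := j) (by omega) (by omega), T.E3 (k := k) (by omega) (by omega)] at hr
         have := T.inj2 _ (by omega) _ (by omega) hr; omega)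
      | (rw [T.E4 (k := j) (by omega) (by omega), T.E4 (k := k) (by omega) (by omega)] at hr
         have := T.inj4 _ (by omega) _ (by omega) hr; omega)
      | (rw [T.E5 (k := j) (by omega) (by omega), T.E5 (k := k) (by omega) (by omega)] at hr
         have := T.inj2 _ (by omega) _ (by omega) hr; omega)
      | (rw [T.E6 (k := j) (by omega) (by omega), T.E6 (k := k) (by omega) (by omega)] at hr
         have := T.inj3 _ (by omega) _ (by omega) hr; omega)
      | (rw [T.E7 (k := j) (by omega) (by omega), T.E7 (k := k) (by omega) (by omega)] at hr
         have := T.inj2 _ (by omega) _ (by omega) hr; omega)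
      | (rw [T.E8 (k := j) (by omega) (by omega), T.E8 (k := k) (by omega) (by omega)] at hr
         have := T.inj4 _ (by omega) _ (by omega) hr; omega)

lemma b_inj {j k : ℕ} (hj : j < 4*T.m2+2*T.m3+2*T.m4+4)
    (hk : k < 4*T.m2+2*T.m3+2*T.m4+4) (hE : T.b j = T.b k) : j = k := by
  have hv : T.pos T.v j = T.pos T.v k := by rw [pos, pos, hE]
  have hy : T.pos (T.c2 (T.m2-1)) j = T.pos (T.c2 (T.m2-1)) k := by rw [pos, pos, hE]
  have hr : T.r j = T.r k := by rw [← T.pos_w, ← T.pos_w, pos, pos, hE]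
  have s1 := T.sig hj
  have s2 := T.sig hk
  have hp : T.phase j = T.phase k :=
    pair_inj _ (T.phase_lt j) _ (T.phase_lt k)
      (by rw [← s1.1, ← s2.1, hv]) (by rw [← s1.2, ← s2.2, hy])
  exact T.r_injective hj hk hp hr

end Sig
end TD

section Generic
open SimpleGraph
variable {α : Type} {G : SimpleGraph α}

lemma walk_from (s : ℕ → α) :
    ∀ N, (∀ k < N, G.Adj (s k) (s (k+1))) →
      ∃ W : G.Walk (s 0) (s N), W.length = N ∧ W.support = (List.range (N+1)).map s := by
  intro N
  induction N with
  | zero => exact fun _ => ⟨.nil, rfl, by simp [List.range_succ]⟩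
  | succ n ih =>
      intro h
      obtain ⟨W, hlen, hsup⟩ := ih (fun k hk => h k (by omega))
      refine ⟨W.concat (h n (by omega)), ?_, ?_⟩
      · rw [Walk.length_concat, hlen]
      · rw [Walk.support_concat, hsup, List.range_succ (n := n+1)]
        simp

lemma isCycle_of_tail_nodup {a : α} (W : G.Walk a a) (h3 : 3 ≤ W.length)
    (hnd : W.support.tail.Nodup) : W.IsCycle := by
  cases W with
  | nil => simp at h3
  | @cons _ b _ hadj p =>
      rw [Walk.cons_isCycle_iff]
      have hp : p.IsPath := by
        rw [Walk.isPath_def]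
        simpa using hnd
      refine ⟨hp, ?_⟩
      intro hmem
      cases p with
      | nil => simp at h3
      | @cons _ c _ hadj2 q =>
          rw [Walk.edges_cons, List.mem_cons] at hmem
          rcases hmem with heq | hmem
          · have hac : a = c := by
              rcases Sym2.eq_iff.mp heq with ⟨h1, h2⟩ | ⟨h1, h2⟩
              · exact absurd h1 hadj.ne
              · exact h1
            subst hac
            have : q = Walk.nil := Walk.isPath_iff_eq_nil.mp ((Walk.cons_isPath_iff _ _).mp hp).1
            subst this
            simp at h3
          · have hb : b ∈ q.support := Walk.snd_mem_support_of_mem_edges q hmem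
            exact ((Walk.cons_isPath_iff _ _).mp hp).2 hb

lemma getVert_injOn_of_isPath {u v : α} (p : G.Walk u v) (hp : p.IsPath) :
    ∀ j ≤ p.length, ∀ l ≤ p.length, p.getVert j = p.getVert l → j = l := by
  induction p with
  | nil => intro j hj l hl _; simp at hj hl; omega
  | @cons u' b w' h q ih =>
      intro j hj l hl hE
      rw [Walk.cons_isPath_iff] at hp
      match j, l with
      | 0, 0 => rfl
      | 0, (l+1) =>
          exfalso
          rw [Walk.getVert_zero, Walk.getVert_cons_succ] at hE
          exact hp.2 (Walk.mem_support_iff_exists_getVert.mpr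
            ⟨l, hE.symm, by simpa using hl⟩)
      | (j+1), 0 =>
          exfalso
          rw [Walk.getVert_zero, Walk.getVert_cons_succ] at hE
          exact hp.2 (Walk.mem_support_iff_exists_getVert.mpr
            ⟨j, hE, by simpa using hj⟩)
      | (j+1), (l+1) =>
          rw [Walk.getVert_cons_succ, Walk.getVert_cons_succ] at hE
          have := ih hp.1 j (by simpa using hj) l (by simpa using hl) hE
          omega

end Generic

namespace TD
variable {V : Type} {X : SimpleGraph V} (T : TD V X)

lemma radj {k : ℕ} (hk : k < 4*T.m2+2*T.m3+2*T.m4+4) : X.Adj (T.r k) (T.r (k+1)) := by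
  have hm2 := T.hm2; have hm3 := T.hm3; have hm4 := T.hm4
  rcases (by omega :
    k < T.m2 ∨ k = T.m2 ∨ (T.m2+1 ≤ k ∧ k < T.m2+T.m3+1) ∨
    (T.m2+T.m3+1 ≤ k ∧ k < 2*T.m2+T.m3+1) ∨ k = 2*T.m2+T.m3+1 ∨
    (2*T.m2+T.m3+2 ≤ k ∧ k < 2*T.m2+T.m3+T.m4+2) ∨
    (2*T.m2+T.m3+T.m4+2 ≤ k ∧ k < 3*T.m2+T.m3+T.m4+2) ∨
    (3*T.m2+T.m3+T.m4+2 ≤ k ∧ k < 3*T.m2+2*T.m3+T.m4+2) ∨ k = 3*T.m2+2*T.m3+T.m4+2 ∨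
    (3*T.m2+2*T.m3+T.m4+3 ≤ k ∧ k < 4*T.m2+2*T.m3+T.m4+3) ∨ k = 4*T.m2+2*T.m3+T.m4+3 ∨
    (4*T.m2+2*T.m3+T.m4+4 ≤ k ∧ k < 4*T.m2+2*T.m3+2*T.m4+3) ∨
    k = 4*T.m2+2*T.m3+2*T.m4+3) with
    h|h|h|h|h|h|h|h|h|h|h|h|h
  · rw [T.E1 (by omega), T.E1 (by omega)]
    have := T.adj2 (T.m2-k-1) (by omega)
    have e : T.m2-k-1+1 = T.m2-k := by omega
    rw [e] at this
    have e2 : T.m2-(k+1) = T.m2-k-1 := by omega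
    rw [e2]
    exact this.symm
  · subst h
    rw [T.E1 (by omega), T.E2 (by omega) (by omega), (show T.m2 - T.m2 = 0 by omega), T.h20,
      (show T.m2+T.m3+1 - (T.m2+1) = T.m3 by omega), T.h3m]
    exact T.hvw
  · rw [T.E2 (by omega) (by omega), T.E2 (by omega) (by omega)]
    have := T.adj3 (T.m2+T.m3+1-(k+1)) (by omega)
    have e : T.m2+T.m3+1-(k+1)+1 = T.m2+T.m3+1-k := by omega
    rw [e] at this
    exact this.symm
  · rw [T.E3 (by omega) (by omega), T.E3 (by omega) (by omega)]
    have := T.adj2 (k-(T.m2+T.m3+1)) (by omega)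
    have e : k-(T.m2+T.m3+1)+1 = k+1-(T.m2+T.m3+1) := by omega
    rw [e] at this
    exact this
  · subst h
    rw [T.E3 (by omega) (by omega), T.E4 (by omega) (by omega),
      (show 2*T.m2+T.m3+1 - (T.m2+T.m3+1) = T.m2 by omega), T.h2m,
      (show 2*T.m2+T.m3+1+1 - (2*T.m2+T.m3+2) = 0 by omega), T.h40]
    exact T.hvw.symm
  · rw [T.E4 (by omega) (by omega), T.E4 (by omega) (by omega)]
    have := T.adj4 (k-(2*T.m2+T.m3+2)) (by omega)
    have e : k-(2*T.m2+T.m3+2)+1 = k+1-(2*T.m2+T.m3+2) := by omega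
    rw [e] at this
    exact this
  · rw [T.E5 (by omega) (by omega), T.E5 (by omega) (by omega)]
    have := T.adj2 (3*T.m2+T.m3+T.m4+2-(k+1)) (by omega)
    have e : 3*T.m2+T.m3+T.m4+2-(k+1)+1 = 3*T.m2+T.m3+T.m4+2-k := by omega
    rw [e] at this
    exact this.symm
  · rw [T.E6 (by omega) (by omega), T.E6 (by omega) (by omega)]
    have := T.adj3 (k-(3*T.m2+T.m3+T.m4+2)) (by omega)
    have e : k-(3*T.m2+T.m3+T.m4+2)+1 = k+1-(3*T.m2+T.m3+T.m4+2) := by omega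
    rw [e] at this
    exact this
  · subst h
    rw [T.E6 (by omega) (by omega), T.E7 (by omega) (by omega),
      (show 3*T.m2+2*T.m3+T.m4+2 - (3*T.m2+T.m3+T.m4+2) = T.m3 by omega), T.h3m,
      (show 3*T.m2+2*T.m3+T.m4+2+1 - (3*T.m2+2*T.m3+T.m4+3) = 0 by omega), T.h20]
    exact T.hvw.symm
  · rw [T.E7 (by omega) (by omega), T.E7 (by omega) (by omega)]
    have := T.adj2 (k-(3*T.m2+2*T.m3+T.m4+3)) (by omega)
    have e : k-(3*T.m2+2*T.m3+T.m4+3)+1 = k+1-(3*T.m2+2*T.m3+T.m4+3) := by omega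
    rw [e] at this
    exact this
  · subst h
    rw [T.E7 (by omega) (by omega), T.E8 (by omega) (by omega),
      (show 4*T.m2+2*T.m3+T.m4+3 - (3*T.m2+2*T.m3+T.m4+3) = T.m2 by omega), T.h2m]
    have := T.adj4 (T.m4-1) (by omega)
    rw [(show T.m4-1+1 = T.m4 by omega), T.h4m] at this
    have e : 4*T.m2+2*T.m3+2*T.m4+3 - (4*T.m2+2*T.m3+T.m4+3+1) = T.m4-1 := by omega
    rw [e]
    exact this.symm
  · rw [T.E8 (by omega) (by omega), T.E8 (by omega) (by omega)]
    have := T.adj4 (4*T.m2+2*T.m3+2*T.m4+3-(k+1)) (by omega)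
    have e : 4*T.m2+2*T.m3+2*T.m4+3-(k+1)+1 = 4*T.m2+2*T.m3+2*T.m4+3-k := by omega
    rw [e] at this
    exact this.symm
  · subst h
    rw [T.E8 (by omega) (by omega), T.E9 (by omega),
      (show 4*T.m2+2*T.m3+2*T.m4+3 - (4*T.m2+2*T.m3+2*T.m4+3) = 0 by omega), T.h40]
    exact T.hvw

theorem main [DecidableEq V] [Fintype V] {n : ℕ} (hV : Fintype.card V = n) :
    ∃ (σ : V ≃ Fin n) (c : (FS X (starGraphFin n)).Walk σ σ),
      c.IsCycle ∧ c.length = 4*T.m2+2*T.m3+2*T.m4+4 := by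
  have hm2 := T.hm2; have hm3 := T.hm3; have hm4 := T.hm4
  have hn1 : 1 ≤ n := by
    rw [← hV]
    exact Fintype.card_pos_iff.mpr ⟨T.v⟩
  set L := 4*T.m2+2*T.m3+2*T.m4+4 with hL
  let e : V ≃ Fin n := Fintype.equivFinOfCardEq hV
  let cen : Fin n := ⟨n-1, by omega⟩
  let σ0 : V ≃ Fin n := e.trans (Equiv.swap (e T.w) cen)
  have hσ0w : σ0 T.w = cen := by
    simp only [σ0, Equiv.trans_apply]
    exact Equiv.swap_apply_left _ _
  let s : ℕ → (V ≃ Fin n) := fun k => (T.b k).trans σ0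
  have hs_inj : ∀ {j k : ℕ}, s j = s k → T.b j = T.b k := by
    intro j k hE
    apply Equiv.ext
    intro x
    have := congrArg (fun q : V ≃ Fin n => σ0.symm (q x)) hE
    simpa [s] using this
  have hcen : ∀ k, s k (T.r k) = cen := by
    intro k
    simp only [s, Equiv.trans_apply, T.hole k]
    exact hσ0w
  have hadj : ∀ k < L, (FS X (starGraphFin n)).Adj (s k) (s (k+1)) := by
    intro k hk
    have hXadj := T.radj hk
    refine ⟨T.r k, T.r (k+1), hXadj, ?_, ?_, ?_, ?_⟩
    · refine ⟨fun hE => hXadj.ne ((s k).injective hE), Or.inl ?_⟩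
      rw [hcen k]
    · simp only [s, Equiv.trans_apply, b_succ, Equiv.Perm.mul_apply]
      rw [Equiv.swap_apply_left]
    · simp only [s, Equiv.trans_apply, b_succ, Equiv.Perm.mul_apply]
      rw [Equiv.swap_apply_right]
    · intro c hc1 hc2
      simp only [s, Equiv.trans_apply, b_succ, Equiv.Perm.mul_apply]
      rw [Equiv.swap_apply_of_ne_of_ne hc1 hc2]
  obtain ⟨W, hlen, hsup⟩ := walk_from s L hadj
  have hsL : s L = s 0 := by
    simp only [s]
    rw [T.b_final, T.b_zero]
  refine ⟨s 0, W.copy rfl hsL, ?_, ?_⟩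
  · apply isCycle_of_tail_nodup
    · rw [Walk.length_copy, hlen]; omega
    · rw [Walk.support_copy, hsup, List.range_succ_eq_map]
      rw [List.map_cons, List.tail_cons, List.map_map]
      refine List.Nodup.map_on ?_ (List.nodup_range (n := L))
      intro x hx y hy hE
      rw [List.mem_range] at hx hy
      have hb : T.b (x+1) = T.b (y+1) := hs_inj hE
      rcases (by omega : x + 1 < L ∨ x + 1 = L) with h1 | h1 <;>
        rcases (by omega : y + 1 < L ∨ y + 1 = L) with h2 | h2
      · have := T.b_inj h1 h2 hb; omega
      · rw [h2, T.b_final, ← T.b_zero] at hb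
        have := T.b_inj h1 (by omega) hb
        omega
      · rw [h1, T.b_final, ← T.b_zero] at hb
        have := T.b_inj h2 (by omega) hb.symm
        omega
      · omega
  · rw [Walk.length_copy, hlen]

end TD

/-- Let `X` be a θ₄-graph on `n` vertices: two vertices `v ≠ w` joined by four pairwise
internally disjoint paths `p₁, p₂, p₃, p₄` of lengths
`p₁.length = 1 < p₂.length ≤ p₃.length ≤ p₄.length`. Then `FS(X, Star_n)` contains a
cycle of length `4 + 4·p₂.length + 2·(p₃.length + p₄.length)`; in particular its girth
is at most this quantity. -/
theorem stmt18 {V : Type} [Fintype V] (n : ℕ) (hV : Fintype.card V = n)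
    (X : SimpleGraph V) (v w : V) (hvw : v ≠ w)
    (p₁ p₂ p₃ p₄ : X.Walk v w)
    (h₁ : p₁.IsPath) (h₂ : p₂.IsPath) (h₃ : p₃.IsPath) (h₄ : p₄.IsPath)
    (hd₁₂ : ∀ x : V, x ∈ p₁.support → x ∈ p₂.support → x = v ∨ x = w)
    (hd₁₃ : ∀ x : V, x ∈ p₁.support → x ∈ p₃.support → x = v ∨ x = w)
    (hd₁₄ : ∀ x : V, x ∈ p₁.support → x ∈ p₄.support → x = v ∨ x = w)
    (hd₂₃ : ∀ x : V, x ∈ p₂.support → x ∈ p₃.support → x = v ∨ x = w)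
    (hd₂₄ : ∀ x : V, x ∈ p₂.support → x ∈ p₄.support → x = v ∨ x = w)
    (hd₃₄ : ∀ x : V, x ∈ p₃.support → x ∈ p₄.support → x = v ∨ x = w)
    (hl₁ : p₁.length = 1) (hl₂ : 1 < p₂.length)
    (hl₂₃ : p₂.length ≤ p₃.length) (hl₃₄ : p₃.length ≤ p₄.length)
    (hedges : X.edgeSet = p₁.toSubgraph.edgeSet ∪ p₂.toSubgraph.edgeSet
      ∪ p₃.toSubgraph.edgeSet ∪ p₄.toSubgraph.edgeSet)
    (hverts : ∀ x : V,
      x ∈ p₁.support ∨ x ∈ p₂.support ∨ x ∈ p₃.support ∨ x ∈ p₄.support) :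
    (∃ (σ : V ≃ Fin n) (c : (FS X (starGraphFin n)).Walk σ σ),
        c.IsCycle ∧ c.length = 4 + 4 * p₂.length + 2 * (p₃.length + p₄.length)) ∧
      (FS X (starGraphFin n)).egirth
        ≤ ((4 + 4 * p₂.length + 2 * (p₃.length + p₄.length) : ℕ) : ℕ∞) := by
  classical
  have hvw' : X.Adj v w := by
    have h01 := p₁.adj_getVert_succ (i := 0) (by omega)
    simp only [Walk.getVert_zero, zero_add] at h01
    rwa [(show (1:ℕ) = p₁.length from by omega), Walk.getVert_length] at h01
  have inj2 := getVert_injOn_of_isPath p₂ h₂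
  have inj3 := getVert_injOn_of_isPath p₃ h₃
  have inj4 := getVert_injOn_of_isPath p₄ h₄
  have mem2 : ∀ j ≤ p₂.length, p₂.getVert j ∈ p₂.support :=
    fun j hj => Walk.mem_support_iff_exists_getVert.mpr ⟨j, rfl, hj⟩
  have mem3 : ∀ j ≤ p₃.length, p₃.getVert j ∈ p₃.support :=
    fun j hj => Walk.mem_support_iff_exists_getVert.mpr ⟨j, rfl, hj⟩
  have mem4 : ∀ j ≤ p₄.length, p₄.getVert j ∈ p₄.support :=
    fun j hj => Walk.mem_support_iff_exists_getVert.mpr ⟨j, rfl, hj⟩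
  have d23 : ∀ j l, 0 < j → j < p₂.length → 0 < l → l < p₃.length →
      p₂.getVert j ≠ p₃.getVert l := by
    intro j l hj1 hj2 hl1 hl2 hE
    rcases hd₂₃ _ (mem2 j (by omega)) (hE ▸ mem3 l (by omega)) with h | h
    · have := inj2 j (by omega) 0 (by omega) (h.trans p₂.getVert_zero.symm); omega
    · have := inj2 j (by omega) p₂.length (by omega) (h.trans p₂.getVert_length.symm); omega
  have d24 : ∀ j l, 0 < j → j < p₂.length → 0 < l → l < p₄.length →
      p₂.getVert j ≠ p₄.getVert l := by
    intro j l hj1 hj2 hl1 hl2 hE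
    rcases hd₂₄ _ (mem2 j (by omega)) (hE ▸ mem4 l (by omega)) with h | h
    · have := inj2 j (by omega) 0 (by omega) (h.trans p₂.getVert_zero.symm); omega
    · have := inj2 j (by omega) p₂.length (by omega) (h.trans p₂.getVert_length.symm); omega
  have d34 : ∀ j l, 0 < j → j < p₃.length → 0 < l → l < p₄.length →
      p₃.getVert j ≠ p₄.getVert l := by
    intro j l hj1 hj2 hl1 hl2 hE
    rcases hd₃₄ _ (mem3 j (by omega)) (hE ▸ mem4 l (by omega)) with h | h
    · have := inj3 j (by omega) 0 (by omega) (h.trans p₃.getVert_zero.symm); omega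
    · have := inj3 j (by omega) p₃.length (by omega) (h.trans p₃.getVert_length.symm); omega
  have cover : ∀ x : V, x = v ∨ x = w ∨
      (∃ j, 0 < j ∧ j < p₂.length ∧ x = p₂.getVert j) ∨
      (∃ j, 0 < j ∧ j < p₃.length ∧ x = p₃.getVert j) ∨
      (∃ j, 0 < j ∧ j < p₄.length ∧ x = p₄.getVert j) := by
    intro x
    rcases hverts x with h | h | h | h
    · obtain ⟨j, hj, hjle⟩ := Walk.mem_support_iff_exists_getVert.mp h
      rw [hl₁] at hjle
      rcases (by omega : j = 0 ∨ j = 1) with rfl | rfl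
      · rw [Walk.getVert_zero] at hj; exact .inl hj.symm
      · rw [(show (1:ℕ) = p₁.length by omega), Walk.getVert_length] at hj
        exact .inr (.inl hj.symm)
    · obtain ⟨j, hj, hjle⟩ := Walk.mem_support_iff_exists_getVert.mp h
      rcases (by omega : j = 0 ∨ j = p₂.length ∨ (0 < j ∧ j < p₂.length)) with rfl | rfl | hh
      · rw [Walk.getVert_zero] at hj; exact .inl hj.symm
      · rw [Walk.getVert_length] at hj; exact .inr (.inl hj.symm)
      · exact .inr (.inr (.inl ⟨j, hh.1, hh.2, hj.symm⟩))
    · obtain ⟨j, hj, hjle⟩ := Walk.mem_support_iff_exists_getVert.mp h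
      rcases (by omega : j = 0 ∨ j = p₃.length ∨ (0 < j ∧ j < p₃.length)) with rfl | rfl | hh
      · rw [Walk.getVert_zero] at hj; exact .inl hj.symm
      · rw [Walk.getVert_length] at hj; exact .inr (.inl hj.symm)
      · exact .inr (.inr (.inr (.inl ⟨j, hh.1, hh.2, hj.symm⟩)))
    · obtain ⟨j, hj, hjle⟩ := Walk.mem_support_iff_exists_getVert.mp h
      rcases (by omega : j = 0 ∨ j = p₄.length ∨ (0 < j ∧ j < p₄.length)) with rfl | rfl | hh
      · rw [Walk.getVert_zero] at hj; exact .inl hj.symm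
      · rw [Walk.getVert_length] at hj; exact .inr (.inl hj.symm)
      · exact .inr (.inr (.inr (.inr ⟨j, hh.1, hh.2, hj.symm⟩)))
  let T : TD V X :=
    { v := v, w := w,
      m2 := p₂.length, m3 := p₃.length, m4 := p₄.length,
      c2 := p₂.getVert, c3 := p₃.getVert, c4 := p₄.getVert,
      hm2 := by omega, hm3 := by omega, hm4 := by omega,
      hvw := hvw',
      h20 := p₂.getVert_zero, h2m := p₂.getVert_length,
      h30 := p₃.getVert_zero, h3m := p₃.getVert_length,
      h40 := p₄.getVert_zero, h4m := p₄.getVert_length,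
      adj2 := fun j hj => p₂.adj_getVert_succ hj,
      adj3 := fun j hj => p₃.adj_getVert_succ hj,
      adj4 := fun j hj => p₄.adj_getVert_succ hj,
      inj2 := inj2, inj3 := inj3, inj4 := inj4,
      d23 := d23, d24 := d24, d34 := d34,
      cover := cover }
  obtain ⟨σ, c, hc, hclen⟩ := T.main hV
  have hTm2 : T.m2 = p₂.length := rfl
  have hTm3 : T.m3 = p₃.length := rfl
  have hTm4 : T.m4 = p₄.length := rfl
  have hlen' : c.length = 4 + 4 * p₂.length + 2 * (p₃.length + p₄.length) := by
    rw [hclen, hTm2, hTm3, hTm4]; ring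
  constructor
  · exact ⟨σ, c, hc, hlen'⟩
  · have h1 : (FS X (starGraphFin n)).egirth ≤ (c.length : ℕ∞) :=
      le_trans (iInf_le _ σ) (le_trans (iInf_le _ c) (iInf_le _ hc))
    rwa [hlen'] at h1
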